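/- arXiv:2109.12954 — 4 statements merged into one kernel-verified Lean document; each statement's English description precedes it below -/
import Mathlib

section
/- Let C be an additive Krull–Schmidt category and f : X₁ ⊕ X₂ → Y₁ ⊕ Y₂ a morphism such that π₁ ∘ f ∘ ι₁ lies in the Jacobson radical of C, where ι₁ : X₁ → X₁ ⊕ X₂ is the canonical inclusion and π₁ : Y₁ ⊕ Y₂ → Y₁ is the canonical projection. Then every object Z admitting morphisms g : Z → X₁ ⊕ X₂ and h : Y₁ ⊕ Y₂ → Z with h ∘ f ∘ g an automorphism of Z satisfies Z ∈ add(X₂ ⊕ Y₂). -/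
open CategoryTheory CategoryTheory.Limits Opposite ZeroObject

universe v u

namespace NExangPaper

attribute [local instance] CategoryTheory.Limits.hasBinaryBiproducts_of_finite_biproducts


variable {C : Type u} [Category.{v} C] [Preadditive C]

/-- `f : X ⟶ Y` lies in the Jacobson radical `rad_C` of the preadditive category `C`:
this is the standard characterization `∀ g, 𝟙 X - g ∘ f` is invertible, which for a
Krull–Schmidt category agrees with the ideal whose value at `(A,A)` is the Jacobson
radical of `End A`. -/
def InRad {X Y : C} (f : X ⟶ Y) : Prop := ∀ g : Y ⟶ X, IsIso (𝟙 X - f ≫ g)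

/-- `C` is a Krull–Schmidt category: every object is a finite direct sum of objects with
local endomorphism rings. -/
def IsKrullSchmidt (C : Type u) [Category.{v} C] [Preadditive C] [HasFiniteBiproducts C] : Prop :=
  ∀ X : C, ∃ (k : ℕ) (Y : Fin k → C) (_ : X ≅ ⨁ Y), ∀ i, IsLocalRing (End (Y i))

/-- `Z` belongs to `add W`, i.e. `Z` is a direct summand of a finite direct sum of copies of `W`. -/
def InAdd {C : Type u} [Category.{v} C] [Preadditive C] [HasFiniteBiproducts C]
    (W Z : C) : Prop :=
  ∃ (k : ℕ) (r : Z ⟶ ⨁ fun _ : Fin k => W) (s : (⨁ fun _ : Fin k => W) ⟶ Z), r ≫ s = 𝟙 Z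

/-- An object of the category `C^{n+2}_C` of complexes concentrated in degrees `0,…,n+1`.
(The terms in degrees `> n+1` are irrelevant junk; all conditions only concern degrees
`0,…,n+1`.) -/
structure NComplex (C : Type u) [Category.{v} C] [Preadditive C] (n : ℕ) where
  X : ℕ → C
  d : ∀ i, X i ⟶ X (i + 1)
  dd : ∀ i, i + 1 ≤ n → d i ≫ d (i + 1) = 0

variable {n : ℕ}

/-- A morphism of complexes concentrated in degrees `0,…,n+1`. -/
@[ext]
structure ChainMap (X Y : NComplex C n) where
  f : ∀ i, X.X i ⟶ Y.X i
  comm : ∀ i, i ≤ n → X.d i ≫ f (i + 1) = f i ≫ Y.d i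

def ChainMap.id (X : NComplex C n) : ChainMap X X where
  f _ := 𝟙 _
  comm _ _ := by simp

def ChainMap.comp {X Y Z : NComplex C n} (φ : ChainMap X Y) (ψ : ChainMap Y Z) :
    ChainMap X Z where
  f i := φ.f i ≫ ψ.f i
  comm i hi := by rw [← Category.assoc, φ.comm i hi, Category.assoc, ψ.comm i hi,
    ← Category.assoc]

/-- A chain homotopy between two morphisms of complexes concentrated in degrees `0,…,n+1`. -/
structure Homotopy' {X Y : NComplex C n} (φ ψ : ChainMap X Y) where
  s : ∀ i, X.X (i + 1) ⟶ Y.X i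
  comm0 : φ.f 0 - ψ.f 0 = X.d 0 ≫ s 0
  comm : ∀ i, i + 1 ≤ n → φ.f (i + 1) - ψ.f (i + 1) = s i ≫ Y.d i + X.d (i + 1) ≫ s (i + 1)
  commTop : φ.f (n + 1) - ψ.f (n + 1) = s n ≫ Y.d n

/-- Homotopy equivalence of complexes concentrated in degrees `0,…,n+1`. -/
def HtpyEquiv (X Y : NComplex C n) : Prop :=
  ∃ (φ : ChainMap X Y) (ψ : ChainMap Y X),
    Nonempty (Homotopy' (φ.comp ψ) (ChainMap.id X)) ∧
    Nonempty (Homotopy' (ψ.comp φ) (ChainMap.id Y))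

/-- Homotopy equivalence with identities at the two ends (i.e. homotopy equivalence in the
category `C^{n+2}_{(A,C)}` of complexes with fixed end terms). -/
def FixedHtpyEquiv (X Y : NComplex C n) (h0 : X.X 0 = Y.X 0)
    (h1 : X.X (n + 1) = Y.X (n + 1)) : Prop :=
  ∃ (φ : ChainMap X Y) (ψ : ChainMap Y X),
    φ.f 0 = eqToHom h0 ∧ φ.f (n + 1) = eqToHom h1 ∧
    ψ.f 0 = eqToHom h0.symm ∧ ψ.f (n + 1) = eqToHom h1.symm ∧
    Nonempty (Homotopy' (φ.comp ψ) (ChainMap.id X)) ∧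
    Nonempty (Homotopy' (ψ.comp φ) (ChainMap.id Y))

/-- An isomorphism of complexes concentrated in degrees `0,…,n+1` (levelwise isomorphisms in
the relevant degrees, commuting with the differentials). -/
structure CpxIso (X Y : NComplex C n) where
  e : ∀ i, i ≤ n + 1 → (X.X i ≅ Y.X i)
  comm : ∀ i (hi : i ≤ n),
    X.d i ≫ (e (i + 1) (by omega)).hom = (e i (by omega)).hom ≫ Y.d i

/-- Degreewise direct sum of complexes. -/
noncomputable def biprodC [HasBinaryBiproducts C] (X Y : NComplex C n) : NComplex C n where
  X i := X.X i ⊞ Y.X i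
  d i := biprod.map (X.d i) (Y.d i)
  dd i hi := by
    ext <;> simp [X.dd i hi, Y.dd i hi]

/-- The complex `0 → ⋯ → 0 → Z →(𝟙) Z → 0 → ⋯ → 0` with `Z` placed in degrees `k` and
`k+1`. -/
noncomputable def splitCpx [HasZeroObject C] (Z : C) (k : ℕ) : NComplex C n where
  X j := if j = k ∨ j = k + 1 then Z else 0
  d j :=
    if h : j = k then
      eqToHom (by subst h; simp)
    else 0
  dd j hj := by
    by_cases h : j = k
    · simp [dif_neg (show ¬ j + 1 = k by omega)]
    · simp [dif_neg h]

/-- The zero complex. -/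
noncomputable def zeroCpx [HasZeroObject C] : NComplex C n where
  X _ := 0
  d _ := 0
  dd _ _ := by simp

/-- Image of a complex under an additive functor. -/
def mapCpx {D : Type u} [Category.{v} D] [Preadditive D] (F : C ⥤ D) [F.Additive]
    (X : NComplex C n) : NComplex D n where
  X i := F.obj (X.X i)
  d i := F.map (X.d i)
  dd i hi := by rw [← F.map_comp, X.dd i hi, F.map_zero]

section Exang

variable (C) (n)

/-- The underlying data of an `n`-exangulated category: an additive `Ab`-valued bifunctor `E`
and a class of distinguished `n`-exangles (a complex concentrated in degrees `0,…,n+1`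
together with an `E`-extension attached to its end terms). -/
structure NExangData where
  E : Cᵒᵖ ⥤ C ⥤ AddCommGrpCat.{v}
  Dist : ∀ X : NComplex C n, ((E.obj (op (X.X (n + 1)))).obj (X.X 0)) → Prop

variable {C n}

/-- Transport of an `E`-extension along equalities of its end objects. -/
def ETransport (E : Cᵒᵖ ⥤ C ⥤ AddCommGrpCat.{v}) {A A' B B' : C} (hA : A = A') (hB : B = B')
    (δ : (E.obj (op B)).obj A) : (E.obj (op B')).obj A' :=
  (E.map (eqToHom hB.symm).op).app A' (((E.obj (op B)).map (eqToHom hA)) δ)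

/-- `f` is an `s`-inflation: it is the `0`-th differential of some distinguished `n`-exangle. -/
def NExangData.Inflation (S : NExangData C n) {A B : C} (f : A ⟶ B) : Prop :=
  ∃ (X : NComplex C n) (δ : (S.E.obj (op (X.X (n + 1)))).obj (X.X 0))
    (h0 : X.X 0 = A) (h1 : X.X 1 = B),
      S.Dist X δ ∧ X.d 0 = eqToHom h0 ≫ f ≫ eqToHom h1.symm

/-- `f` is an `s`-deflation: it is the `n`-th differential of some distinguished `n`-exangle. -/
def NExangData.Deflation (S : NExangData C n) {A B : C} (f : A ⟶ B) : Prop :=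
  ∃ (X : NComplex C n) (δ : (S.E.obj (op (X.X (n + 1)))).obj (X.X 0))
    (h0 : X.X n = A) (h1 : X.X (n + 1) = B),
      S.Dist X δ ∧ X.d n = eqToHom h0 ≫ f ≫ eqToHom h1.symm

/-- `M` is (a choice of) the mapping cone of a morphism `f• : X• → Y•` with `f₀ = id`:
`M : X₁ → X₂ ⊕ Y₁ → ⋯ → X_{n+1} ⊕ Y_n → Y_{n+1}`, encoded via binary biproduct (bicone)
data in the middle degrees and the usual matrix differentials. -/
def IsMappingCone {X Y : NComplex C n} (φ : ChainMap X Y) (M : NComplex C n) : Prop :=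
  ∃ (h0 : M.X 0 = X.X 1) (htop : M.X (n + 1) = Y.X (n + 1))
    (p : ∀ i, 1 ≤ i → i ≤ n → (M.X i ⟶ X.X (i + 1)))
    (q : ∀ i, 1 ≤ i → i ≤ n → (M.X i ⟶ Y.X i))
    (ι₁ : ∀ i, 1 ≤ i → i ≤ n → (X.X (i + 1) ⟶ M.X i))
    (ι₂ : ∀ i, 1 ≤ i → i ≤ n → (Y.X i ⟶ M.X i)),
    (∀ i (h1 : 1 ≤ i) (h2 : i ≤ n),
      ι₁ i h1 h2 ≫ p i h1 h2 = 𝟙 _ ∧ ι₂ i h1 h2 ≫ q i h1 h2 = 𝟙 _ ∧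
      ι₁ i h1 h2 ≫ q i h1 h2 = 0 ∧ ι₂ i h1 h2 ≫ p i h1 h2 = 0 ∧
      p i h1 h2 ≫ ι₁ i h1 h2 + q i h1 h2 ≫ ι₂ i h1 h2 = 𝟙 (M.X i)) ∧
    (∀ hn : 1 ≤ n,
      M.d 0 ≫ p 1 le_rfl hn = eqToHom h0 ≫ (-(X.d 1)) ∧
      M.d 0 ≫ q 1 le_rfl hn = eqToHom h0 ≫ φ.f 1) ∧
    (∀ i (h1 : 1 ≤ i) (h2 : i + 1 ≤ n),
      M.d i = p i h1 (by omega) ≫ (-(X.d (i + 1))) ≫ ι₁ (i + 1) (by omega) h2 +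
        p i h1 (by omega) ≫ φ.f (i + 1) ≫ ι₂ (i + 1) (by omega) h2 +
        q i h1 (by omega) ≫ Y.d i ≫ ι₂ (i + 1) (by omega) h2) ∧
    (∀ hn : 1 ≤ n,
      M.d n = p n hn le_rfl ≫ φ.f (n + 1) ≫ eqToHom htop.symm +
        q n hn le_rfl ≫ Y.d n ≫ eqToHom htop.symm)

/-- `N` is (a choice of) the mapping cocone of a morphism `f• : X• → Y•` with `f_{n+1} = id`:
`N : X₀ → X₁ ⊕ Y₀ → ⋯ → X_n ⊕ Y_{n-1} → Y_n`, encoded via binary biproduct (bicone) data. -/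
def IsMappingCocone {X Y : NComplex C n} (φ : ChainMap X Y) (N : NComplex C n) : Prop :=
  ∃ (h0 : N.X 0 = X.X 0) (htop : N.X (n + 1) = Y.X n)
    (p : ∀ j, j + 1 ≤ n → (N.X (j + 1) ⟶ X.X (j + 1)))
    (q : ∀ j, j + 1 ≤ n → (N.X (j + 1) ⟶ Y.X j))
    (ι₁ : ∀ j, j + 1 ≤ n → (X.X (j + 1) ⟶ N.X (j + 1)))
    (ι₂ : ∀ j, j + 1 ≤ n → (Y.X j ⟶ N.X (j + 1))),
    (∀ j (hj : j + 1 ≤ n),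
      ι₁ j hj ≫ p j hj = 𝟙 _ ∧ ι₂ j hj ≫ q j hj = 𝟙 _ ∧
      ι₁ j hj ≫ q j hj = 0 ∧ ι₂ j hj ≫ p j hj = 0 ∧
      p j hj ≫ ι₁ j hj + q j hj ≫ ι₂ j hj = 𝟙 (N.X (j + 1))) ∧
    (∀ hn : 1 ≤ n,
      N.d 0 = eqToHom h0 ≫ ((-(X.d 0)) ≫ ι₁ 0 hn + φ.f 0 ≫ ι₂ 0 hn)) ∧
    (∀ j (hj : j + 2 ≤ n),
      N.d (j + 1) = p j (by omega) ≫ (-(X.d (j + 1))) ≫ ι₁ (j + 1) hj +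
        p j (by omega) ≫ φ.f (j + 1) ≫ ι₂ (j + 1) hj +
        q j (by omega) ≫ Y.d j ≫ ι₂ (j + 1) hj) ∧
    (∀ j (hj : j + 1 = n),
      N.d (j + 1) = p j (by omega) ≫ φ.f (j + 1) ≫ eqToHom (by rw [hj, htop]) +
        q j (by omega) ≫ Y.d j ≫ eqToHom (by rw [hj, htop]))

variable (C n)

/-- An `n`-exangulated category `(C, E, s)` in the sense of Herschend–Liu–Nakaoka, encoded by
its additive bifunctor `E`, the class `Dist` of (`s`-)distinguished `n`-exangles, and the
axioms: `E` is biadditive, distinguished `n`-exangles are `n`-exangles (R1), the realization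
is defined on every extension (R0 existence of lifts, surjectivity of `s`, invariance under
homotopy equivalence with fixed ends), (R2), (EA1), (EA2) and (EA2ᵒᵖ). -/
structure NExang [HasZeroObject C] extends NExangData C n where
  additive_snd : ∀ A : Cᵒᵖ, (E.obj A).Additive
  additive_fst : ∀ B : C, (E.flip.obj B).Additive
  -- (R1): distinguished n-exangles are n-exangles
  ex_contra_mid : ∀ X δ, Dist X δ → ∀ i, i + 1 ≤ n → ∀ (W : C) (h : W ⟶ X.X (i + 1)),
    h ≫ X.d (i + 1) = 0 → ∃ g : W ⟶ X.X i, g ≫ X.d i = h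
  ex_contra_top : ∀ X δ, Dist X δ → ∀ (W : C) (h : W ⟶ X.X (n + 1)),
    (E.map h.op).app (X.X 0) δ = 0 → ∃ g : W ⟶ X.X n, g ≫ X.d n = h
  ex_co_mid : ∀ X δ, Dist X δ → ∀ i, i + 1 ≤ n → ∀ (W : C) (h : X.X (i + 1) ⟶ W),
    X.d i ≫ h = 0 → ∃ g : X.X (i + 2) ⟶ W, X.d (i + 1) ≫ g = h
  ex_co_bot : ∀ X δ, Dist X δ → ∀ (W : C) (h : X.X 0 ⟶ W),
    ((E.obj (op (X.X (n + 1)))).map h) δ = 0 → ∃ g : X.X 1 ⟶ W, X.d 0 ≫ g = h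
  attached_push : ∀ X δ, Dist X δ → ((E.obj (op (X.X (n + 1)))).map (X.d 0)) δ = 0
  attached_pull : ∀ X δ, Dist X δ → (E.map (X.d n).op).app (X.X 0) δ = 0
  -- (R0): lifts of morphisms of extensions
  lift : ∀ X Y δ ρ, Dist X δ → Dist Y ρ →
    ∀ (a : X.X 0 ⟶ Y.X 0) (c : X.X (n + 1) ⟶ Y.X (n + 1)),
      ((E.obj (op (X.X (n + 1)))).map a) δ = (E.map c.op).app (Y.X 0) ρ →
      ∃ φ : ChainMap X Y, φ.f 0 = a ∧ φ.f (n + 1) = c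
  -- `s` realizes every extension
  realize : ∀ (A B : C) (δ : (E.obj (op B)).obj A),
    ∃ (X : NComplex C n) (h0 : X.X 0 = A) (h1 : X.X (n + 1) = B),
      Dist X (ETransport E h0.symm h1.symm δ)
  -- `s(δ)` is a single homotopy class with fixed ends…
  unique : ∀ X Y δ (h0 : X.X 0 = Y.X 0) (h1 : X.X (n + 1) = Y.X (n + 1)),
    Dist X δ → Dist Y (ETransport E h0 h1 δ) → FixedHtpyEquiv X Y h0 h1
  -- …and is closed under homotopy equivalences with fixed ends
  closedHtpy : ∀ X Y δ (h0 : X.X 0 = Y.X 0) (h1 : X.X (n + 1) = Y.X (n + 1)),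
    Dist X δ → FixedHtpyEquiv X Y h0 h1 → Dist Y (ETransport E h0 h1 δ)
  -- (R2)
  realize_zero₁ : ∀ A : C, Dist (splitCpx A 0) 0
  realize_zero₂ : ∀ A : C, Dist (splitCpx A n) 0
  -- (EA1)
  ea1_infl : ∀ {A B Z : C} (f : A ⟶ B) (g : B ⟶ Z),
    toNExangData.Inflation f → toNExangData.Inflation g → toNExangData.Inflation (f ≫ g)
  ea1_defl : ∀ {A B Z : C} (f : A ⟶ B) (g : B ⟶ Z),
    toNExangData.Deflation f → toNExangData.Deflation g → toNExangData.Deflation (f ≫ g)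
  -- (EA2): good lifts of (𝟙, c) exist, with distinguished mapping cone
  ea2 : ∀ {A D Co : C} (ρ : (E.obj (op D)).obj A) (c : Co ⟶ D) (X Y : NComplex C n)
    (hX0 : X.X 0 = A) (hXn : X.X (n + 1) = Co) (hY0 : Y.X 0 = A) (hYn : Y.X (n + 1) = D),
    Dist X (ETransport E hX0.symm hXn.symm ((E.map c.op).app A ρ)) →
    Dist Y (ETransport E hY0.symm hYn.symm ρ) →
    ∃ φ : ChainMap X Y, φ.f 0 = eqToHom (hX0.trans hY0.symm) ∧
      φ.f (n + 1) = eqToHom hXn ≫ c ≫ eqToHom hYn.symm ∧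
      ∃ M : NComplex C n, IsMappingCone φ M ∧
        ∃ (hM0 : M.X 0 = X.X 1) (hMn : M.X (n + 1) = Y.X (n + 1)),
          Dist M (ETransport E hM0.symm (hMn.trans hYn).symm
            (((E.obj (op D)).map (eqToHom hX0.symm ≫ X.d 0)) ρ))
  -- (EA2ᵒᵖ): good lifts of (a, 𝟙) exist, with distinguished mapping cocone
  ea2op : ∀ {A B D : C} (ρ : (E.obj (op D)).obj A) (a : A ⟶ B) (X Y : NComplex C n)
    (hX0 : X.X 0 = A) (hXn : X.X (n + 1) = D) (hY0 : Y.X 0 = B) (hYn : Y.X (n + 1) = D),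
    Dist X (ETransport E hX0.symm hXn.symm ρ) →
    Dist Y (ETransport E hY0.symm hYn.symm (((E.obj (op D)).map a) ρ)) →
    ∃ φ : ChainMap X Y, φ.f 0 = eqToHom hX0 ≫ a ≫ eqToHom hY0.symm ∧
      φ.f (n + 1) = eqToHom (hXn.trans hYn.symm) ∧
      ∃ N : NComplex C n, IsMappingCocone φ N ∧
        ∃ (hN0 : N.X 0 = X.X 0) (hNn : N.X (n + 1) = Y.X n),
          Dist N (ETransport E (hN0.trans hX0).symm hNn.symm
            ((E.map (Y.d n ≫ eqToHom hYn).op).app A ρ))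

end Exang

section Sub

variable {C : Type u} [Category.{v} C] [Preadditive C] {n : ℕ}

/-- The subcategory determined by `𝒜 ⊆ C` is closed under isomorphisms, finite direct sums
and direct summands. -/
def GoodSubcat [HasBinaryBiproducts C] (𝒜 : Set C) : Prop :=
  (∀ (A B : C), A ∈ 𝒜 → (A ≅ B) → B ∈ 𝒜) ∧
  (∀ (A B : C), A ∈ 𝒜 → B ∈ 𝒜 → (A ⊞ B) ∈ 𝒜) ∧
  (∀ (A B : C) (r : A ⟶ B) (s : B ⟶ A), r ≫ s = 𝟙 A → B ∈ 𝒜 → A ∈ 𝒜)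

/-- `𝒜` is an `n`-extension closed subcategory of `(C, E, s)`: every `E`-extension between
objects of `𝒜` is realized by a distinguished `n`-exangle whose terms in degrees `1,…,n`
belong to `𝒜`. -/
def NExtClosed (S : NExangData C n) (𝒜 : Set C) : Prop :=
  ∀ (A B : C), A ∈ 𝒜 → B ∈ 𝒜 → ∀ δ : (S.E.obj (op B)).obj A,
    ∃ (X : NComplex C n) (h0 : X.X 0 = A) (h1 : X.X (n + 1) = B),
      S.Dist X (ETransport S.E h0.symm h1.symm δ) ∧ ∀ i, 1 ≤ i → i ≤ n → X.X i ∈ 𝒜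

/-- `f` is a `t`-inflation for the structure inherited by the `n`-extension closed
subcategory `𝒜`: it is the `0`-th differential of a distinguished `n`-exangle of `C` all of
whose terms in degrees `1,…,n+1` lie in `𝒜`. -/
def TInfl (S : NExangData C n) (𝒜 : Set C) {A B : C} (f : A ⟶ B) : Prop :=
  ∃ (X : NComplex C n) (δ : (S.E.obj (op (X.X (n + 1)))).obj (X.X 0))
    (h0 : X.X 0 = A) (h1 : X.X 1 = B),
      S.Dist X δ ∧ (∀ i, 1 ≤ i → i ≤ n + 1 → X.X i ∈ 𝒜) ∧
      X.d 0 = eqToHom h0 ≫ f ≫ eqToHom h1.symm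

/-- `P` is a projective object of the `n`-exangulated category. -/
def IsProj (S : NExangData C n) (P : C) : Prop :=
  ∀ X δ, S.Dist X δ → ∀ c : P ⟶ X.X (n + 1), ∃ b : P ⟶ X.X n, b ≫ X.d n = c

/-- `I` is an injective object of the `n`-exangulated category. -/
def IsInj (S : NExangData C n) (I : C) : Prop :=
  ∀ X δ, S.Dist X δ → ∀ c : X.X 0 ⟶ I, ∃ b : X.X 1 ⟶ I, X.d 0 ≫ b = c

/-- The `n`-exangulated category has enough projectives. -/
def EnoughProj (S : NExangData C n) : Prop :=
  ∀ Z : C, ∃ (X : NComplex C n) (δ : (S.E.obj (op (X.X (n + 1)))).obj (X.X 0)),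
    X.X (n + 1) = Z ∧ S.Dist X δ ∧ ∀ i, 1 ≤ i → i ≤ n → IsProj S (X.X i)

/-- The `n`-exangulated category has enough injectives. -/
def EnoughInj (S : NExangData C n) : Prop :=
  ∀ Z : C, ∃ (X : NComplex C n) (δ : (S.E.obj (op (X.X (n + 1)))).obj (X.X 0)),
    X.X 0 = Z ∧ S.Dist X δ ∧ ∀ i, 1 ≤ i → i ≤ n → IsInj S (X.X i)

/-- `Ω𝒜 = CoCone(𝒫, 𝒜)`: objects `B` admitting a distinguished `n`-exangle
`B → P₁ → ⋯ → P_n → A'` with all `P_i` projective and `A' ∈ 𝒜`. -/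
def OmegaSet (S : NExangData C n) (𝒜 : Set C) : Set C :=
  {B | ∃ (X : NComplex C n) (δ : (S.E.obj (op (X.X (n + 1)))).obj (X.X 0)),
    X.X 0 = B ∧ S.Dist X δ ∧ (∀ i, 1 ≤ i → i ≤ n → IsProj S (X.X i)) ∧ X.X (n + 1) ∈ 𝒜}

/-- `Σ𝒜 = Cone(𝒜, ℐ)`: objects `Z` admitting a distinguished `n`-exangle
`A' → I₁ → ⋯ → I_n → Z` with all `I_i` injective and `A' ∈ 𝒜`. -/
def SigmaSet (S : NExangData C n) (𝒜 : Set C) : Set C :=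
  {Z | ∃ (X : NComplex C n) (δ : (S.E.obj (op (X.X (n + 1)))).obj (X.X 0)),
    X.X (n + 1) = Z ∧ S.Dist X δ ∧ (∀ i, 1 ≤ i → i ≤ n → IsInj S (X.X i)) ∧ X.X 0 ∈ 𝒜}

end Sub

section NExact

variable {C : Type u} [Category.{v} C] [Preadditive C] {n : ℕ}

/-- A complex concentrated in degrees `0,…,n+1` is an `n`-exact sequence: for every object
`W` the induced sequences `0 → Hom(W,X₀) → ⋯ → Hom(W,X_{n+1})` and
`0 → Hom(X_{n+1},W) → ⋯ → Hom(X₀,W)` are exact. -/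
structure IsNExactSeq (X : NComplex C n) : Prop where
  mono : ∀ (W : C) (h : W ⟶ X.X 0), h ≫ X.d 0 = 0 → h = 0
  epi : ∀ (W : C) (h : X.X (n + 1) ⟶ W), X.d n ≫ h = 0 → h = 0
  ex_contra : ∀ i, i + 1 ≤ n → ∀ (W : C) (h : W ⟶ X.X (i + 1)),
    h ≫ X.d (i + 1) = 0 → ∃ g : W ⟶ X.X i, g ≫ X.d i = h
  ex_co : ∀ i, i + 1 ≤ n → ∀ (W : C) (h : X.X (i + 1) ⟶ W),
    X.d i ≫ h = 0 → ∃ g : X.X (i + 2) ⟶ W, X.d (i + 1) ≫ g = h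

/-- A weak isomorphism of `n`-exact sequences: a morphism `f•` such that `f_i` and `f_{i+1}`
are isomorphisms for some `0 ≤ i ≤ n+1` (with `f_{n+2} := f₀`). -/
def IsWeakIso {X Y : NComplex C n} (φ : ChainMap X Y) : Prop :=
  (∃ i, i ≤ n ∧ IsIso (φ.f i) ∧ IsIso (φ.f (i + 1))) ∨
  (IsIso (φ.f (n + 1)) ∧ IsIso (φ.f 0))

/-- `f• : X• → Y•` (with `f_{n+1}` an identification of the top terms) is an `n`-pushout
diagram of the bottom part `X₀ → ⋯ → X_n` along `f₀`: the mapping-cone complex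
`X₀ → X₁ ⊕ Y₀ → ⋯ → X_n ⊕ Y_{n-1} → Y_n` is right exact, written out componentwise. -/
structure IsNPushout {X Y : NComplex C n} (φ : ChainMap X Y) : Prop where
  inj : ∀ k, k + 1 = n → ∀ (W : C) (h : Y.X (k + 1) ⟶ W),
    φ.f (k + 1) ≫ h = 0 → Y.d k ≫ h = 0 → h = 0
  ex1 : 2 ≤ n → ∀ (W : C) (u : X.X 1 ⟶ W) (v : Y.X 0 ⟶ W),
    φ.f 0 ≫ v = X.d 0 ≫ u →
    ∃ (u' : X.X 2 ⟶ W) (v' : Y.X 1 ⟶ W),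
      u = φ.f 1 ≫ v' - X.d 1 ≫ u' ∧ v = Y.d 0 ≫ v'
  exMid : ∀ k, k + 3 ≤ n → ∀ (W : C) (u : X.X (k + 2) ⟶ W) (v : Y.X (k + 1) ⟶ W),
    φ.f (k + 1) ≫ v = X.d (k + 1) ≫ u → Y.d k ≫ v = 0 →
    ∃ (u' : X.X (k + 3) ⟶ W) (v' : Y.X (k + 2) ⟶ W),
      u = φ.f (k + 2) ≫ v' - X.d (k + 2) ≫ u' ∧ v = Y.d (k + 1) ≫ v'
  exTop : ∀ k, k + 2 = n → ∀ (W : C) (u : X.X (k + 2) ⟶ W) (v : Y.X (k + 1) ⟶ W),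
    φ.f (k + 1) ≫ v = X.d (k + 1) ≫ u → Y.d k ≫ v = 0 →
    ∃ h : Y.X (k + 2) ⟶ W, u = φ.f (k + 2) ≫ h ∧ v = Y.d (k + 1) ≫ h
  exTop1 : 1 = n → ∀ (W : C) (u : X.X 1 ⟶ W) (v : Y.X 0 ⟶ W),
    φ.f 0 ≫ v = X.d 0 ≫ u →
    ∃ h : Y.X 1 ⟶ W, u = φ.f 1 ≫ h ∧ v = Y.d 0 ≫ h

/-- `f• : X• → Y•` (with `f₀` an identification of the bottom terms) is an `n`-pullback
diagram of the top part `Y₁ → ⋯ → Y_{n+1}` along `f_{n+1}`: the complex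
`X₁ → X₂ ⊕ Y₁ → ⋯ → X_{n+1} ⊕ Y_n → Y_{n+1}` is left exact, written out componentwise. -/
structure IsNPullback {X Y : NComplex C n} (φ : ChainMap X Y) : Prop where
  inj : ∀ (W : C) (h : W ⟶ X.X 1), h ≫ X.d 1 = 0 → h ≫ φ.f 1 = 0 → h = 0
  ex1 : 2 ≤ n → ∀ (W : C) (u : W ⟶ X.X 2) (v : W ⟶ Y.X 1),
    u ≫ X.d 2 = 0 → u ≫ φ.f 2 + v ≫ Y.d 1 = 0 →
    ∃ w : W ⟶ X.X 1, u = -(w ≫ X.d 1) ∧ v = w ≫ φ.f 1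
  exMid : ∀ k, k + 3 ≤ n → ∀ (W : C) (u : W ⟶ X.X (k + 3)) (v : W ⟶ Y.X (k + 2)),
    u ≫ X.d (k + 3) = 0 → u ≫ φ.f (k + 3) + v ≫ Y.d (k + 2) = 0 →
    ∃ (u₀ : W ⟶ X.X (k + 2)) (v₀ : W ⟶ Y.X (k + 1)),
      u = -(u₀ ≫ X.d (k + 2)) ∧ v = u₀ ≫ φ.f (k + 2) + v₀ ≫ Y.d (k + 1)
  exTop : ∀ k, k + 2 = n → ∀ (W : C) (u : W ⟶ X.X (k + 3)) (v : W ⟶ Y.X (k + 2)),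
    u ≫ φ.f (k + 3) + v ≫ Y.d (k + 2) = 0 →
    ∃ (u₀ : W ⟶ X.X (k + 2)) (v₀ : W ⟶ Y.X (k + 1)),
      u = -(u₀ ≫ X.d (k + 2)) ∧ v = u₀ ≫ φ.f (k + 2) + v₀ ≫ Y.d (k + 1)
  exTop1 : 1 = n → ∀ (W : C) (u : W ⟶ X.X 2) (v : W ⟶ Y.X 1),
    u ≫ φ.f 2 + v ≫ Y.d 1 = 0 →
    ∃ w : W ⟶ X.X 1, u = -(w ≫ X.d 1) ∧ v = w ≫ φ.f 1

variable (C n)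

/-- An `n`-exact category in the sense of Jasso: an additive category together with a class
of `n`-exact sequences (the admissible ones, or conflations), closed under weak
isomorphisms, containing the trivial sequences and satisfying the axioms (E1), (E1ᵒᵖ),
(E2) (existence of `n`-pushouts of conflations along morphisms from the first term) and
(E2ᵒᵖ). -/
structure NExactCategory [HasZeroObject C] where
  conflation : NComplex C n → Prop
  nexact : ∀ X, conflation X → IsNExactSeq X
  closed_weakIso₁ : ∀ (X Y : NComplex C n) (φ : ChainMap X Y),
    conflation X → IsNExactSeq Y → IsWeakIso φ → conflation Y
  closed_weakIso₂ : ∀ (X Y : NComplex C n) (φ : ChainMap X Y),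
    conflation Y → IsNExactSeq X → IsWeakIso φ → conflation X
  e0 : ∀ A : C, conflation (splitCpx A 0)
  e0' : ∀ A : C, conflation (splitCpx A n)
  e1 : ∀ {A B Z : C} (f : A ⟶ B) (g : B ⟶ Z),
    (∃ (X : NComplex C n) (h0 : X.X 0 = A) (h1 : X.X 1 = B), conflation X ∧
        X.d 0 = eqToHom h0 ≫ f ≫ eqToHom h1.symm) →
    (∃ (X : NComplex C n) (h0 : X.X 0 = B) (h1 : X.X 1 = Z), conflation X ∧
        X.d 0 = eqToHom h0 ≫ g ≫ eqToHom h1.symm) →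
    (∃ (X : NComplex C n) (h0 : X.X 0 = A) (h1 : X.X 1 = Z), conflation X ∧
        X.d 0 = eqToHom h0 ≫ (f ≫ g) ≫ eqToHom h1.symm)
  e1op : ∀ {A B Z : C} (f : A ⟶ B) (g : B ⟶ Z),
    (∃ (X : NComplex C n) (h0 : X.X n = A) (h1 : X.X (n + 1) = B), conflation X ∧
        X.d n = eqToHom h0 ≫ f ≫ eqToHom h1.symm) →
    (∃ (X : NComplex C n) (h0 : X.X n = B) (h1 : X.X (n + 1) = Z), conflation X ∧
        X.d n = eqToHom h0 ≫ g ≫ eqToHom h1.symm) →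
    (∃ (X : NComplex C n) (h0 : X.X n = A) (h1 : X.X (n + 1) = Z), conflation X ∧
        X.d n = eqToHom h0 ≫ (f ≫ g) ≫ eqToHom h1.symm)
  e2 : ∀ X, conflation X → ∀ (B : C) (g : X.X 0 ⟶ B),
    ∃ (Y : NComplex C n) (φ : ChainMap X Y) (h0 : Y.X 0 = B)
      (htop : X.X (n + 1) = Y.X (n + 1)),
      φ.f 0 = g ≫ eqToHom h0.symm ∧ φ.f (n + 1) = eqToHom htop ∧
      IsNPushout φ ∧ conflation Y
  e2op : ∀ Y, conflation Y → ∀ (B : C) (g : B ⟶ Y.X (n + 1)),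
    ∃ (X : NComplex C n) (φ : ChainMap X Y) (htop : X.X (n + 1) = B)
      (h0 : X.X 0 = Y.X 0),
      φ.f (n + 1) = eqToHom htop ≫ g ∧ φ.f 0 = eqToHom h0 ∧
      IsNPullback φ ∧ conflation X

end NExact


/-- A distinguished `n`-exangle is minimal if all its inner differentials
`X₁ → X₂, …, X_{n-1} → X_n` lie in the Jacobson radical of `C`. -/
def MinimalCpx {C : Type u} [Category.{v} C] [Preadditive C] {n : ℕ} (X : NComplex C n) :
    Prop :=
  ∀ i, 1 ≤ i → i + 1 ≤ n → InRad (X.d i)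

/-- Direct sum of a finite list of split complexes `split_{p.2}(p.1)`. -/
noncomputable def sumSplitCpx {C : Type u} [Category.{v} C] [Preadditive C] [HasZeroObject C]
    [HasBinaryBiproducts C] {n : ℕ} (L : List (C × ℕ)) : NComplex C n :=
  L.foldr (fun p acc => biprodC (splitCpx p.1 p.2) acc) zeroCpx

/-- If `f` lies in the radical, so does any composite `a ≫ f ≫ b`. -/
lemma inRad_comp {D : Type u} [Category.{v} D] [Preadditive D]
    {X Y A B : D} (f : X ⟶ Y) (hf : InRad f) (a : A ⟶ X) (b : Y ⟶ B) :
    InRad (a ≫ f ≫ b) := by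
  intro u
  have h1 : IsIso (𝟙 X - f ≫ (b ≫ u ≫ a)) := hf (b ≫ u ≫ a)
  set z := inv (𝟙 X - f ≫ (b ≫ u ≫ a)) with hz
  have hz1 : (𝟙 X - f ≫ (b ≫ u ≫ a)) ≫ z = 𝟙 X := IsIso.hom_inv_id _
  have hz2 : z ≫ (𝟙 X - f ≫ (b ≫ u ≫ a)) = 𝟙 X := IsIso.inv_hom_id _
  have key1 : ∀ {W : D} (w : X ⟶ W), f ≫ b ≫ u ≫ a ≫ z ≫ w = z ≫ w - w := by
    intro W w
    have : f ≫ b ≫ u ≫ a ≫ z = z - 𝟙 X := by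
      have := hz1
      simp only [Preadditive.sub_comp, Category.id_comp, Category.assoc] at this
      rw [sub_eq_iff_eq_add] at this
      rw [eq_sub_iff_add_eq]
      conv_rhs => rw [this]
      abel
    calc f ≫ b ≫ u ≫ a ≫ z ≫ w = (f ≫ b ≫ u ≫ a ≫ z) ≫ w := by simp
    _ = (z - 𝟙 X) ≫ w := by rw [this]
    _ = z ≫ w - w := by simp [Preadditive.sub_comp]
  have key2 : z ≫ f ≫ b ≫ u ≫ a = z - 𝟙 X := by
    have := hz2
    simp only [Preadditive.comp_sub, Category.comp_id] at this
    rw [sub_eq_iff_eq_add] at this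
    rw [← Category.assoc, ← Category.assoc, ← Category.assoc, eq_sub_iff_add_eq]
    conv_rhs => rw [this]
    simp only [Category.assoc]
    abel
  refine ⟨⟨𝟙 A + a ≫ z ≫ f ≫ b ≫ u, ?_, ?_⟩⟩
  · simp only [Preadditive.sub_comp, Preadditive.comp_add, Preadditive.add_comp,
      Category.comp_id, Category.id_comp, Category.assoc]
    rw [key1]
    simp only [Preadditive.comp_sub]
    abel
  · simp only [Preadditive.add_comp, Preadditive.comp_sub, Preadditive.sub_comp,
      Category.comp_id, Category.id_comp, Category.assoc]
    have : a ≫ z ≫ f ≫ b ≫ u ≫ a ≫ f ≫ b ≫ u = a ≫ (z ≫ f ≫ b ≫ u ≫ a) ≫ f ≫ b ≫ u := by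
      simp
    rw [this, key2]
    simp only [Preadditive.sub_comp, Preadditive.comp_sub, Category.id_comp]
    abel

/-- Lemma 2.7 of Klapproth, used as Lemma `matrix` in the paper.
Let `C` be an additive Krull–Schmidt category and `f : X₁ ⊕ X₂ ⟶ Y₁ ⊕ Y₂` a morphism such
that `π₁ ∘ f ∘ ι₁` lies in the Jacobson radical of `C`.  Then every object `Z` admitting
morphisms `g : Z ⟶ X₁ ⊕ X₂` and `h : Y₁ ⊕ Y₂ ⟶ Z` with `h ∘ f ∘ g` an automorphism of `Z`
satisfies `Z ∈ add (X₂ ⊕ Y₂)`. -/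
theorem stmt0 {C : Type u} [Category.{v} C] [Preadditive C] [HasFiniteBiproducts C]
    (hKS : IsKrullSchmidt C) (X₁ X₂ Y₁ Y₂ : C) (f : X₁ ⊞ X₂ ⟶ Y₁ ⊞ Y₂)
    (hrad : InRad (biprod.inl ≫ f ≫ biprod.fst : X₁ ⟶ Y₁))
    (Z : C) (g : Z ⟶ X₁ ⊞ X₂) (h : Y₁ ⊞ Y₂ ⟶ Z) (hauto : IsIso (g ≫ f ≫ h)) :
    InAdd (X₂ ⊞ Y₂) Z := by
  set h' : Y₁ ⊞ Y₂ ⟶ Z := h ≫ inv (g ≫ f ≫ h) with hh'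
  have hgfh : g ≫ f ≫ h' = 𝟙 Z := by
    rw [hh']
    have e : g ≫ f ≫ h ≫ inv (g ≫ f ≫ h) = (g ≫ f ≫ h) ≫ inv (g ≫ f ≫ h) := by
      simp only [Category.assoc]
    rw [e, IsIso.hom_inv_id]
  set ρ : Z ⟶ Z :=
    (g ≫ biprod.fst) ≫ (biprod.inl ≫ f ≫ biprod.fst) ≫ (biprod.inl ≫ h') with hρdef
  have hρ : InRad ρ := inRad_comp _ hrad (g ≫ biprod.fst) (biprod.inl ≫ h')
  have hs : IsIso (𝟙 Z - ρ) := by simpa using hρ (𝟙 Z)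
  set r : Z ⟶ X₂ ⊞ Y₂ :=
    biprod.lift (g ≫ biprod.snd) (g ≫ biprod.fst ≫ biprod.inl ≫ f ≫ biprod.snd) with hrdef
  set t : X₂ ⊞ Y₂ ⟶ Z := biprod.desc (biprod.inr ≫ f ≫ h') (biprod.inr ≫ h') with htdef
  have hsum : ρ + r ≫ t = 𝟙 Z := by
    rw [← hgfh]
    have hXtot : (biprod.fst ≫ biprod.inl + biprod.snd ≫ biprod.inr : X₁ ⊞ X₂ ⟶ _) = 𝟙 _ :=
      biprod.total
    have hYtot : (biprod.fst ≫ biprod.inl + biprod.snd ≫ biprod.inr : Y₁ ⊞ Y₂ ⟶ _) = 𝟙 _ :=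
      biprod.total
    calc ρ + r ≫ t
        = g ≫ ((biprod.fst ≫ biprod.inl) ≫ f ≫
            ((biprod.fst ≫ biprod.inl + biprod.snd ≫ biprod.inr) ≫ h') +
            (biprod.snd ≫ biprod.inr) ≫ f ≫ h') := by
          simp only [hρdef, hrdef, htdef, biprod.lift_desc, Preadditive.add_comp,
            Preadditive.comp_add, Category.assoc]
          abel
      _ = g ≫ f ≫ h' := by
          rw [hYtot]
          conv_rhs => rw [← Category.id_comp (f ≫ h'), ← hXtot]
          simp only [Preadditive.add_comp, Preadditive.comp_add, Category.assoc,
            Category.id_comp]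
  have hrt : r ≫ t = 𝟙 Z - ρ := by rw [← hsum]; abel
  have hiso : IsIso (r ≫ t) := hrt ▸ hs
  refine ⟨1, r ≫ biproduct.lift (fun _ => 𝟙 (X₂ ⊞ Y₂)),
    biproduct.desc (fun _ => t ≫ inv (r ≫ t)), ?_⟩
  simp only [Category.assoc, biproduct.lift_desc]
  rw [Fin.sum_univ_one]
  simp only [Category.id_comp]
  rw [← Category.assoc]
  exact IsIso.hom_inv_id _


end NExangPaper
end

section
/- Let C be an additive Krull–Schmidt category and f : X₁ ⊕ X₂ → Y₁ ⊕ Y₂ a morphism with π₁ ∘ f ∘ ι₁ in the Jacobson radical of C. If the identity of an object Z factors through f (i.e. there exist g : Z → X₁ ⊕ X₂ and h : Y₁ ⊕ Y₂ → Z with h ∘ f ∘ g = id_Z), then Z is a direct summand of X₂ ⊕ Y₂ ⊕ X₂ ⊕ Y₂ (in particular Z ∈ add(X₂ ⊕ Y₂)). -/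
open CategoryTheory CategoryTheory.Limits Opposite ZeroObject

universe v u

namespace NExangPaper

attribute [local instance] CategoryTheory.Limits.hasBinaryBiproducts_of_finite_biproducts


variable {C : Type u} [Category.{v} C] [Preadditive C]

variable {n : ℕ}

/-- If `𝟙 - y ≫ x` is invertible, so is `𝟙 - x ≫ y`. -/
lemma isIso_one_sub_comm {C : Type u} [Category.{v} C] [Preadditive C] {Z X : C}
    (x : Z ⟶ X) (y : X ⟶ Z) (hyx : IsIso (𝟙 X - y ≫ x)) : IsIso (𝟙 Z - x ≫ y) := by
  have h1 : (𝟙 X - y ≫ x) ≫ inv (𝟙 X - y ≫ x) = 𝟙 X := IsIso.hom_inv_id _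
  have h2 : inv (𝟙 X - y ≫ x) ≫ (𝟙 X - y ≫ x) = 𝟙 X := IsIso.inv_hom_id _
  set w := inv (𝟙 X - y ≫ x) with hw
  have e1 : y ≫ x ≫ w = w - 𝟙 X := by
    have h1' : w - y ≫ x ≫ w = 𝟙 X := by
      simpa [Preadditive.sub_comp, Category.assoc] using h1
    rw [← h1']; abel
  have e2 : w ≫ y ≫ x = w - 𝟙 X := by
    have h2' : w - w ≫ y ≫ x = 𝟙 X := by
      simpa [Preadditive.comp_sub, Category.assoc] using h2
    rw [← h2']; abel
  have key1 : ∀ (t : X ⟶ Z), y ≫ x ≫ w ≫ t = w ≫ t - t := by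
    intro t
    calc y ≫ x ≫ w ≫ t = (y ≫ x ≫ w) ≫ t := by simp [Category.assoc]
    _ = (w - 𝟙 X) ≫ t := by rw [e1]
    _ = w ≫ t - t := by simp [Preadditive.sub_comp]
  have key2 : ∀ (t : X ⟶ Z), w ≫ y ≫ x ≫ t = w ≫ t - t := by
    intro t
    calc w ≫ y ≫ x ≫ t = (w ≫ y ≫ x) ≫ t := by simp [Category.assoc]
    _ = (w - 𝟙 X) ≫ t := by rw [e2]
    _ = w ≫ t - t := by simp [Preadditive.sub_comp]
  refine ⟨𝟙 Z + x ≫ w ≫ y, ?_, ?_⟩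
  · simp only [Preadditive.sub_comp, Preadditive.comp_add, Preadditive.add_comp,
      Preadditive.comp_sub, Category.id_comp, Category.comp_id, Category.assoc, key1]
    abel
  · simp only [Preadditive.sub_comp, Preadditive.comp_add, Preadditive.add_comp,
      Preadditive.comp_sub, Category.id_comp, Category.comp_id, Category.assoc, key2]
    abel

/-- Let `C` be an additive Krull–Schmidt category and
`f : X₁ ⊕ X₂ ⟶ Y₁ ⊕ Y₂` with `π₁ ∘ f ∘ ι₁` in the Jacobson radical of `C`.  If the identity
of `Z` factors through `f`, then `Z` is a direct summand of `X₂ ⊕ Y₂ ⊕ X₂ ⊕ Y₂`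
(in particular `Z ∈ add (X₂ ⊕ Y₂)`). -/
theorem stmt1 {C : Type u} [Category.{v} C] [Preadditive C] [HasFiniteBiproducts C]
    (hKS : IsKrullSchmidt C) (X₁ X₂ Y₁ Y₂ : C) (f : X₁ ⊞ X₂ ⟶ Y₁ ⊞ Y₂)
    (hrad : InRad (biprod.inl ≫ f ≫ biprod.fst : X₁ ⟶ Y₁))
    (Z : C) (g : Z ⟶ X₁ ⊞ X₂) (h : Y₁ ⊞ Y₂ ⟶ Z) (hfac : g ≫ f ≫ h = 𝟙 Z) :
    (∃ (r : Z ⟶ (X₂ ⊞ Y₂) ⊞ (X₂ ⊞ Y₂)) (s : (X₂ ⊞ Y₂) ⊞ (X₂ ⊞ Y₂) ⟶ Z), r ≫ s = 𝟙 Z) ∧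
      InAdd (X₂ ⊞ Y₂) Z := by
  classical
  set a : X₁ ⟶ Y₁ := biprod.inl ≫ f ≫ biprod.fst with ha
  set x : Z ⟶ X₁ := g ≫ biprod.fst with hx
  set y : X₁ ⟶ Z := a ≫ biprod.inl ≫ h with hy
  have hyx : IsIso (𝟙 X₁ - y ≫ x) := by
    have := hrad ((biprod.inl ≫ h) ≫ x)
    simpa [hy, ha, Category.assoc] using this
  have he : IsIso (𝟙 Z - x ≫ y) := isIso_one_sub_comm x y hyx
  set u₁ : Z ⟶ X₂ := g ≫ biprod.snd with hu₁
  set v₁ : X₂ ⟶ Z := biprod.inr ≫ f ≫ h with hv₁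
  set u₂ : Z ⟶ Y₂ := g ≫ biprod.fst ≫ biprod.inl ≫ f ≫ biprod.snd with hu₂
  set v₂ : Y₂ ⟶ Z := biprod.inr ≫ h with hv₂
  have key : u₁ ≫ v₁ + u₂ ≫ v₂ = 𝟙 Z - x ≫ y := by
    rw [← hfac]
    have hf : f = (biprod.fst ≫ biprod.inl + biprod.snd ≫ biprod.inr) ≫ f ≫
        (biprod.fst ≫ biprod.inl + biprod.snd ≫ biprod.inr) := by
      rw [biprod.total, biprod.total]; simp
    have hexp : (f ≫ h : X₁ ⊞ X₂ ⟶ Z) =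
        f ≫ biprod.fst ≫ biprod.inl ≫ h + f ≫ biprod.snd ≫ biprod.inr ≫ h := by
      have tot : (biprod.fst ≫ biprod.inl + biprod.snd ≫ biprod.inr : Y₁ ⊞ Y₂ ⟶ _) = 𝟙 _ :=
        biprod.total
      calc f ≫ h = f ≫ (biprod.fst ≫ biprod.inl + biprod.snd ≫ biprod.inr) ≫ h := by
            rw [tot, Category.id_comp]
        _ = _ := by simp only [Preadditive.comp_add, Preadditive.add_comp, Category.assoc]
    conv_rhs => rw [hf]
    simp only [hu₁, hv₁, hu₂, hv₂, hx, hy, ha, hexp, Preadditive.add_comp,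
      Preadditive.comp_add, Category.assoc]
    abel
  have hlift : biprod.lift u₁ u₂ ≫ biprod.desc v₁ v₂ = 𝟙 Z - x ≫ y := by
    rw [biprod.lift_desc, key]
  have main : biprod.lift u₁ u₂ ≫ biprod.desc v₁ v₂ ≫ inv (𝟙 Z - x ≫ y) = 𝟙 Z := by
    rw [← Category.assoc, hlift, IsIso.hom_inv_id]
  constructor
  · refine ⟨biprod.lift u₁ u₂ ≫ biprod.inl,
      biprod.fst ≫ biprod.desc v₁ v₂ ≫ inv (𝟙 Z - x ≫ y), ?_⟩
    rw [Category.assoc, ← Category.assoc (biprod.inl), biprod.inl_fst, Category.id_comp,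
      main]
  · refine ⟨1, biprod.lift u₁ u₂ ≫ biproduct.ι (fun _ : Fin 1 => X₂ ⊞ Y₂) 0,
      biproduct.π (fun _ : Fin 1 => X₂ ⊞ Y₂) 0 ≫ biprod.desc v₁ v₂ ≫ inv (𝟙 Z - x ≫ y), ?_⟩
    rw [Category.assoc, ← Category.assoc (biproduct.ι _ 0), biproduct.ι_π_self,
      Category.id_comp, main]

end NExangPaper
end

section
/- Let (C,E,s) be a Krull–Schmidt n-exangulated category and let A₀, A_{n+1} be objects of C. Then every E-extension δ ∈ E(A_{n+1}, A₀) admits a distinguished n-exangle realization A₀ → A₁ → A₂ → ⋯ → A_n → A_{n+1} in which all the intermediate differentials A₁ → A₂, …, A_{n-1} → A_n lie in the Jacobson radical of C. -/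
open CategoryTheory CategoryTheory.Limits Opposite ZeroObject

universe v u

namespace NExangPaper

attribute [local instance] CategoryTheory.Limits.hasBinaryBiproducts_of_finite_biproducts


variable {C : Type u} [Category.{v} C] [Preadditive C]

variable {n : ℕ}

section RingAux
variable {R : Type*} [Ring R]

lemma loc_isUnit_or (hR : IsLocalRing R) (a : R) : IsUnit a ∨ IsUnit (1 - a) :=
  hR.isUnit_or_isUnit_of_add_one (by abel)

lemma loc_one_sub (hR : IsLocalRing R) {a : R} (h : ¬IsUnit a) : IsUnit (1 - a) :=
  (loc_isUnit_or hR a).resolve_left h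

lemma loc_nonunit_add (hR : IsLocalRing R) {a b : R}
    (ha : ¬IsUnit a) (hb : ¬IsUnit b) : ¬IsUnit (a + b) := by
  intro h
  obtain ⟨u, hu⟩ := h
  have h1 : a * (↑u⁻¹ : R) + b * (↑u⁻¹ : R) = 1 := by
    rw [← add_mul, ← hu, Units.mul_inv]
  rcases hR.isUnit_or_isUnit_of_add_one h1 with h2 | h2
  · exact ha (by simpa using h2.mul u.isUnit)
  · exact hb (by simpa using h2.mul u.isUnit)

lemma loc_exists_isUnit_of_sum_eq_one (hR : IsLocalRing R) {N : ℕ}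
    (f : Fin N → R) (h : ∑ j, f j = 1) : ∃ j, IsUnit (f j) := by
  by_contra hc
  push_neg at hc
  haveI := hR.toNontrivial
  have : ¬IsUnit (∑ j ∈ Finset.univ, f j) :=
    Finset.sum_induction f (fun x => ¬IsUnit x)
      (fun a b ha hb => loc_nonunit_add hR ha hb)
      (not_isUnit_zero)
      (fun j _ => hc j)
  rw [h] at this
  exact this isUnit_one

end RingAux

section Alg
variable [HasFiniteBiproducts C]

/-- Decomposition into `m` objects with local endomorphism rings. -/
def Decomp (m : ℕ) (V : C) : Prop :=
  ∃ (Y : Fin m → C) (_ : V ≅ ⨁ Y), ∀ j, IsLocalRing (End (Y j))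

/-- `IsUnit` in the endomorphism monoid. -/
def EUnit {Z : C} (e : Z ⟶ Z) : Prop := @IsUnit (End Z) _ e

lemma eunit_iff_isIso {Z : C} (e : Z ⟶ Z) : EUnit e ↔ IsIso e := isUnit_iff_isIso e

lemma retract_iso {Z W : C} (s : Z ⟶ W) (r : W ⟶ Z) (h : s ≫ r = 𝟙 Z)
    (hW : IsLocalRing (End W)) (hZ : (𝟙 Z : Z ⟶ Z) ≠ 0) : r ≫ s = 𝟙 W := by
  set e : End W := r ≫ s with he
  have hidem : e * e = e := by
    show (r ≫ s) ≫ (r ≫ s) = r ≫ s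
    rw [Category.assoc, ← Category.assoc s r, h, Category.id_comp]
  rcases loc_isUnit_or hW e with hu | hu
  · obtain ⟨u, hue⟩ := hu
    have h1 : (↑u⁻¹ : End W) * (e * e) = (↑u⁻¹ : End W) * e := by rw [hidem]
    rw [← hue, ← mul_assoc, Units.inv_mul, one_mul] at h1
    rw [hue] at h1
    show e = 𝟙 W
    exact h1
  · exfalso
    obtain ⟨u, hue⟩ := hu
    have he0 : e = 0 := by
      have h1 : e * (1 - e) = 0 := by rw [mul_sub, mul_one, hidem, sub_self]
      have h2 : e * ((1 - e) * (↑u⁻¹ : End W)) = 0 := by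
        rw [← mul_assoc, h1, zero_mul]
      rwa [← hue, Units.mul_inv, mul_one] at h2
    apply hZ
    have h4 : (r ≫ s : W ⟶ W) = 0 := he0
    have h3 : (𝟙 Z : Z ⟶ Z) = s ≫ (r ≫ s) ≫ r := by
      calc (𝟙 Z : Z ⟶ Z) = (s ≫ r) ≫ (s ≫ r) := by rw [h]; simp
      _ = s ≫ (r ≫ s) ≫ r := by simp only [Category.assoc]
    rw [h3, h4, zero_comp, comp_zero]

/-- Peel off the `j0`-th summand of a finite biproduct. -/
noncomputable def peelIso {k : ℕ} (Y : Fin (k + 1) → C) (j0 : Fin (k + 1)) :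
    (⨁ Y) ≅ Y j0 ⊞ ⨁ (Y ∘ j0.succAbove) where
  hom := biprod.lift (biproduct.π Y j0)
    (biproduct.lift fun j => biproduct.π Y (j0.succAbove j))
  inv := biprod.desc (biproduct.ι Y j0)
    (biproduct.desc fun j => biproduct.ι Y (j0.succAbove j))
  hom_inv_id := by
    rw [biprod.lift_desc, biproduct.lift_desc, ← biproduct.total]
    exact (Fin.sum_univ_succAbove (fun x => biproduct.π Y x ≫ biproduct.ι Y x) j0).symm
  inv_hom_id := by
    ext j j'
    · simp
    · simp [(Fin.succAbove_ne j0 _).symm, biproduct.ι_π_ne]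
    · simp [Fin.succAbove_ne j0 _, biproduct.ι_π_ne]
    · by_cases hjj : j = j'
      · subst hjj; simp
      · simp [biproduct.ι_π_ne _ hjj,
          biproduct.ι_π_ne _ (fun hcon => hjj (Fin.succAbove_right_injective hcon))]



lemma gaussian_formula {P Q P' Q' : C} (f₁₁ : P ⟶ P') (f₁₂ : P ⟶ Q') (f₂₁ : Q ⟶ P')
    (f₂₂ : Q ⟶ Q') [IsIso f₁₁] :
    ∃ (L : P ⊞ Q ≅ P ⊞ Q) (R : P' ⊞ Q' ≅ P' ⊞ Q'),
      L.hom ≫ Biprod.ofComponents f₁₁ f₁₂ f₂₁ f₂₂ ≫ R.hom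
        = biprod.map f₁₁ (f₂₂ - f₂₁ ≫ inv f₁₁ ≫ f₁₂) :=
  ⟨Biprod.unipotentLower (-f₂₁ ≫ inv f₁₁), Biprod.unipotentUpper (-inv f₁₁ ≫ f₁₂),
    (Biprod.gaussian' f₁₁ f₁₂ f₂₁ f₂₂).2.2.2⟩

lemma gaussian_any {P Q P' Q' : C} (f : P ⊞ Q ⟶ P' ⊞ Q')
    (h : IsIso (biprod.inl ≫ f ≫ biprod.fst)) :
    ∃ (L : P ⊞ Q ≅ P ⊞ Q) (R : P' ⊞ Q' ≅ P' ⊞ Q'),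
      L.hom ≫ f ≫ R.hom = biprod.map (biprod.inl ≫ f ≫ biprod.fst)
        ((biprod.inr ≫ f ≫ biprod.snd) -
          (biprod.inr ≫ f ≫ biprod.fst) ≫ inv (biprod.inl ≫ f ≫ biprod.fst) ≫
            (biprod.inl ≫ f ≫ biprod.snd)) := by
  haveI := h
  obtain ⟨L, R, hw⟩ := gaussian_formula (biprod.inl ≫ f ≫ biprod.fst)
    (biprod.inl ≫ f ≫ biprod.snd) (biprod.inr ≫ f ≫ biprod.fst) (biprod.inr ≫ f ≫ biprod.snd)
  rw [Biprod.ofComponents_eq] at hw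
  exact ⟨L, R, hw⟩

lemma gaussian_id {P Q Q' : C} (f : P ⊞ Q ⟶ P ⊞ Q')
    (hf : biprod.inl ≫ f ≫ biprod.fst = 𝟙 P) :
    ∃ (L : P ⊞ Q ≅ P ⊞ Q) (R : P ⊞ Q' ≅ P ⊞ Q') (g : Q ⟶ Q'),
      L.hom ≫ f ≫ R.hom = biprod.map (𝟙 P) g := by
  have hi : IsIso (biprod.inl ≫ f ≫ biprod.fst) := by rw [hf]; infer_instance
  obtain ⟨L, R, hw⟩ := gaussian_any f hi
  refine ⟨L, R, biprod.inr ≫ f ≫ biprod.snd -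
        (biprod.inr ≫ f ≫ biprod.fst) ≫ inv (biprod.inl ≫ f ≫ biprod.fst) ≫
          biprod.inl ≫ f ≫ biprod.snd, ?_⟩
  rw [hw]
  congr 1


section Core
variable [HasFiniteBiproducts C]

lemma eunit_add_nonunit {Z : C} (hZ : IsLocalRing (End Z)) {a b : Z ⟶ Z}
    (ha : ¬EUnit a) (hb : ¬EUnit b) : ¬EUnit (a + b) :=
  loc_nonunit_add hZ ha hb

lemma core_rad : ∀ (k : ℕ) (V : C) (Y : Fin k → C) (_ : V ≅ ⨁ Y)
    (_ : ∀ j, IsLocalRing (End (Y j))) (h : V ⟶ V),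
    (∀ (Z : C), IsLocalRing (End Z) → ∀ (a : Z ⟶ V) (c : V ⟶ Z), ¬ EUnit (a ≫ h ≫ c)) →
    IsIso (𝟙 V - h) := by
  intro k
  induction k with
  | zero =>
    intro V Y w _ h _
    have h2 : (𝟙 (⨁ Y) : ⨁ Y ⟶ ⨁ Y) = 0 := by
      rw [← biproduct.total]
      simp
    have h1 : (𝟙 V : V ⟶ V) = 0 := by
      calc (𝟙 V : V ⟶ V) = w.hom ≫ 𝟙 (⨁ Y) ≫ w.inv := by simp
        _ = 0 := by rw [h2]; simp
    have h3 : h = 0 := by rw [← Category.id_comp h, h1, zero_comp]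
    rw [h3, sub_zero, h1]
    exact ⟨0, by simp [h1], by simp [h1]⟩
  | succ k IH =>
    intro V Y w hY h hyp
    let P : C := Y 0
    let Q : C := ⨁ (Y ∘ Fin.succAbove 0)
    let ω : V ≅ P ⊞ Q := w ≪≫ peelIso Y 0
    set t : P ⊞ Q ⟶ P ⊞ Q := ω.inv ≫ h ≫ ω.hom with ht
    have hP : IsLocalRing (End P) := hY 0
    have h11nu : ¬ EUnit (biprod.inl ≫ t ≫ biprod.fst) := by
      have := hyp P hP (biprod.inl ≫ ω.inv) (ω.hom ≫ biprod.fst)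
      simpa [ht, Category.assoc] using this
    have hαu : EUnit (𝟙 P - biprod.inl ≫ t ≫ biprod.fst) := loc_one_sub hP h11nu
    have hα : IsIso (𝟙 P - biprod.inl ≫ t ≫ biprod.fst) := (eunit_iff_isIso _).1 hαu
    set F : P ⊞ Q ⟶ P ⊞ Q := 𝟙 (P ⊞ Q) - t with hF
    have hF11 : biprod.inl ≫ F ≫ biprod.fst = 𝟙 P - biprod.inl ≫ t ≫ biprod.fst := by
      rw [hF]; simp
    have hiF11 : IsIso (biprod.inl ≫ F ≫ biprod.fst) := by rw [hF11]; exact hα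
    obtain ⟨L, R, hLR⟩ := gaussian_any F hiF11
    set α : P ⟶ P := biprod.inl ≫ F ≫ biprod.fst with hαdef
    set G : Q ⟶ Q := (biprod.inr ≫ F ≫ biprod.snd) -
      (biprod.inr ≫ F ≫ biprod.fst) ≫ inv α ≫ (biprod.inl ≫ F ≫ biprod.snd) with hGdef
    set h' : Q ⟶ Q := (biprod.inr ≫ t ≫ biprod.snd) +
      (biprod.inr ≫ t ≫ biprod.fst) ≫ inv α ≫ (biprod.inl ≫ t ≫ biprod.snd) with hh'
    have hG : G = 𝟙 Q - h' := by
      rw [hGdef, hh', hF]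
      simp only [Preadditive.sub_comp, Preadditive.comp_sub, Category.id_comp,
        Category.comp_id, Category.assoc, biprod.inr_snd, biprod.inr_fst, biprod.inl_snd,
        zero_comp, comp_zero, zero_sub, sub_zero, Preadditive.neg_comp,
        Preadditive.comp_neg, neg_neg, sub_neg_eq_add]
      abel
    have hyp' : ∀ (Z : C), IsLocalRing (End Z) → ∀ (a : Z ⟶ Q) (c : Q ⟶ Z),
        ¬ EUnit (a ≫ h' ≫ c) := by
      intro Z hZ a c
      have e1 := hyp Z hZ (a ≫ biprod.inr ≫ ω.inv) (ω.hom ≫ biprod.snd ≫ c)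
      have e2 := hyp Z hZ (a ≫ biprod.inr ≫ ω.inv)
        (ω.hom ≫ biprod.fst ≫ inv α ≫ biprod.inl ≫ ω.inv ≫ h ≫ ω.hom ≫ biprod.snd ≫ c)
      have heq : a ≫ h' ≫ c =
          (a ≫ biprod.inr ≫ ω.inv) ≫ h ≫ (ω.hom ≫ biprod.snd ≫ c) +
          (a ≫ biprod.inr ≫ ω.inv) ≫ h ≫
            (ω.hom ≫ biprod.fst ≫ inv α ≫ biprod.inl ≫ ω.inv ≫ h ≫ ω.hom ≫ biprod.snd ≫ c) := by
        rw [hh', ht]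
        simp only [Preadditive.add_comp, Preadditive.comp_add, Category.assoc]
      rw [heq]
      exact eunit_add_nonunit hZ e1 e2
    have hGiso : IsIso G := by
      rw [hG]
      exact IH Q (Y ∘ Fin.succAbove 0) (Iso.refl Q) (fun j => hY _) h' hyp'
    haveI : IsIso α := hiF11
    haveI : IsIso G := hGiso
    have hmap : IsIso (biprod.map α G) :=
      (inferInstance : IsIso (biprod.mapIso (asIso α) (asIso G)).hom)
    have hFiso : IsIso F := by
      have : F = L.inv ≫ biprod.map α G ≫ R.inv := by
        rw [← hLR]
        simp
      rw [this]
      infer_instance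
    have hfinal : 𝟙 V - h = ω.hom ≫ F ≫ ω.inv := by
      rw [hF, ht]
      simp
    rw [hfinal]
    infer_instance

end Core

lemma peelIso_hom_fst {k : ℕ} (Y : Fin (k + 1) → C) (j0 : Fin (k + 1)) :
    (peelIso Y j0).hom ≫ biprod.fst = biproduct.π Y j0 :=
  biprod.lift_fst _ _

lemma inl_peelIso_inv {k : ℕ} (Y : Fin (k + 1) → C) (j0 : Fin (k + 1)) :
    biprod.inl ≫ (peelIso Y j0).inv = biproduct.ι Y j0 :=
  biprod.inl_desc _ _

lemma exists_unit_comp {V1 V2 : C} {m : ℕ} (hdec : Decomp m V1) (d : V1 ⟶ V2)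
    (hNot : ¬ InRad d) :
    ∃ (Z : C), IsLocalRing (End Z) ∧ ∃ (a : Z ⟶ V1) (b : V2 ⟶ Z), a ≫ d ≫ b = 𝟙 Z := by
  obtain ⟨Y, w, hY⟩ := hdec
  rw [InRad] at hNot; push_neg at hNot
  obtain ⟨g, hg⟩ := hNot
  by_contra hcon
  push_neg at hcon
  apply hg
  have hyp : ∀ (Z : C), IsLocalRing (End Z) → ∀ (a : Z ⟶ V1) (c : V1 ⟶ Z),
      ¬ EUnit (a ≫ (d ≫ g) ≫ c) := by
    intro Z hZ a c hu
    have hiso : IsIso (a ≫ (d ≫ g) ≫ c) := (eunit_iff_isIso _).1 hu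
    refine hcon Z hZ a (g ≫ c ≫ inv (a ≫ (d ≫ g) ≫ c)) ?_
    calc a ≫ d ≫ g ≫ c ≫ inv (a ≫ (d ≫ g) ≫ c)
        = (a ≫ (d ≫ g) ≫ c) ≫ inv (a ≫ (d ≫ g) ≫ c) := by simp only [Category.assoc]
      _ = 𝟙 Z := IsIso.hom_inv_id _
  exact core_rad m V1 Y w hY (d ≫ g) hyp

lemma side_step {V Z₀ : C} {m : ℕ} (Y : Fin m → C) (w : V ≅ ⨁ Y)
    (hY : ∀ j, IsLocalRing (End (Y j))) (hZ₀ : IsLocalRing (End Z₀))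
    (a₀ : Z₀ ⟶ V) (q : V ⟶ Z₀) (hab : a₀ ≫ q = 𝟙 Z₀) :
    ∃ (j0 : Fin m) (c : Z₀ ⟶ Z₀),
      (a₀ ≫ w.hom ≫ biproduct.π Y j0) ≫ ((biproduct.ι Y j0 ≫ w.inv ≫ q) ≫ c) = 𝟙 Z₀ ∧
      ((biproduct.ι Y j0 ≫ w.inv ≫ q) ≫ c) ≫ (a₀ ≫ w.hom ≫ biproduct.π Y j0) = 𝟙 (Y j0) := by
  have expand : (a₀ ≫ q : Z₀ ⟶ Z₀) =
      ∑ j, (a₀ ≫ w.hom ≫ biproduct.π Y j) ≫ (biproduct.ι Y j ≫ w.inv ≫ q) := by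
    calc (a₀ ≫ q : Z₀ ⟶ Z₀)
        = a₀ ≫ (w.hom ≫ (∑ j, biproduct.π Y j ≫ biproduct.ι Y j) ≫ w.inv) ≫ q := by
          rw [biproduct.total]; simp
      _ = ∑ j, (a₀ ≫ w.hom ≫ biproduct.π Y j) ≫ (biproduct.ι Y j ≫ w.inv ≫ q) := by
          simp only [Preadditive.sum_comp, Preadditive.comp_sum, Category.assoc]
  have hsum : (∑ j, ((a₀ ≫ w.hom ≫ biproduct.π Y j) ≫
      (biproduct.ι Y j ≫ w.inv ≫ q) : Z₀ ⟶ Z₀)) = 𝟙 Z₀ := by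
    rw [← expand]; exact hab
  obtain ⟨j0, hj0u⟩ := loc_exists_isUnit_of_sum_eq_one (R := End Z₀) hZ₀ _ hsum
  haveI hiso : IsIso ((a₀ ≫ w.hom ≫ biproduct.π Y j0) ≫ (biproduct.ι Y j0 ≫ w.inv ≫ q)) :=
    (eunit_iff_isIso _).1 hj0u
  refine ⟨j0, inv ((a₀ ≫ w.hom ≫ biproduct.π Y j0) ≫ (biproduct.ι Y j0 ≫ w.inv ≫ q)),
    ?_, ?_⟩
  · rw [← Category.assoc]; exact IsIso.hom_inv_id _
  · refine retract_iso _ _ ?_ (hY j0) ?_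
    · rw [← Category.assoc]; exact IsIso.hom_inv_id _
    · haveI := hZ₀.toNontrivial
      have h10 : (1 : End Z₀) ≠ 0 := one_ne_zero
      exact h10

lemma id_eq_zero_of_decomp_zero {V : C} (Y : Fin 0 → C) (w : V ≅ ⨁ Y) :
    (𝟙 V : V ⟶ V) = 0 := by
  have h2 : (𝟙 (⨁ Y) : ⨁ Y ⟶ ⨁ Y) = 0 := by
    rw [← biproduct.total]; simp
  calc (𝟙 V : V ⟶ V) = w.hom ≫ 𝟙 (⨁ Y) ≫ w.inv := by simp
    _ = 0 := by rw [h2]; simp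

lemma split_step {V1 V2 : C} {m1 m2 : ℕ} (h1 : Decomp m1 V1) (h2 : Decomp m2 V2)
    (d : V1 ⟶ V2) (hNot : ¬ InRad d) :
    ∃ (Z K L : C) (U : V1 ≅ Z ⊞ K) (V : V2 ≅ Z ⊞ L) (g : K ⟶ L),
      U.inv ≫ d ≫ V.hom = biprod.map (𝟙 Z) g ∧
      1 ≤ m1 ∧ 1 ≤ m2 ∧ Decomp (m1 - 1) K ∧ Decomp (m2 - 1) L := by
  obtain ⟨Z₀, hZ₀, a₀, b₀, hab⟩ := exists_unit_comp h1 d hNot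
  obtain ⟨Y, w, hY⟩ := h1
  obtain ⟨W, w', hW⟩ := h2
  cases m1 with
  | zero =>
    exfalso
    apply hNot
    intro g
    have hd0 : d = 0 := by
      rw [← Category.id_comp d, id_eq_zero_of_decomp_zero Y w, zero_comp]
    rw [hd0, zero_comp, sub_zero]
    infer_instance
  | succ k1 =>
  cases m2 with
  | zero =>
    exfalso
    apply hNot
    intro g
    have hd0 : d = 0 := by
      rw [← Category.comp_id d, id_eq_zero_of_decomp_zero W w', comp_zero]
    rw [hd0, zero_comp, sub_zero]
    infer_instance
  | succ k2 =>
  -- first side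
  obtain ⟨j0, c, hc1, hc2⟩ := side_step Y w hY hZ₀ a₀ (d ≫ b₀) hab
  have hZloc : IsLocalRing (End (Y j0)) := hY j0
  have hab1 : (biproduct.ι Y j0 ≫ w.inv) ≫ d ≫
      (b₀ ≫ c ≫ (a₀ ≫ w.hom ≫ biproduct.π Y j0)) = 𝟙 (Y j0) := by
    have := hc2
    simp only [Category.assoc] at this ⊢
    exact this
  -- second side
  obtain ⟨j1, c', hd1, hd2⟩ := side_step W w' hW hZloc
    ((biproduct.ι Y j0 ≫ w.inv) ≫ d) (b₀ ≫ c ≫ (a₀ ≫ w.hom ≫ biproduct.π Y j0)) (by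
      simp only [Category.assoc] at hab1 ⊢
      exact hab1)
  let isoWZ : W j1 ≅ Y j0 :=
    ⟨(biproduct.ι W j1 ≫ w'.inv ≫ (b₀ ≫ c ≫ (a₀ ≫ w.hom ≫ biproduct.π Y j0))) ≫ c',
     ((biproduct.ι Y j0 ≫ w.inv) ≫ d) ≫ w'.hom ≫ biproduct.π W j1, hd2, hd1⟩
  let u : V1 ≅ Y j0 ⊞ (⨁ (Y ∘ j0.succAbove)) := w ≪≫ peelIso Y j0
  let v : V2 ≅ Y j0 ⊞ (⨁ (W ∘ j1.succAbove)) :=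
    w' ≪≫ peelIso W j1 ≪≫ biprod.mapIso isoWZ (Iso.refl _)
  have hf11 : biprod.inl ≫ (u.inv ≫ d ≫ v.hom) ≫ biprod.fst = 𝟙 (Y j0) := by
    have e1 : biprod.inl ≫ u.inv = biproduct.ι Y j0 ≫ w.inv := by
      show biprod.inl ≫ (peelIso Y j0).inv ≫ w.inv = _
      rw [← Category.assoc, inl_peelIso_inv]
    have e2 : v.hom ≫ biprod.fst = w'.hom ≫ biproduct.π W j1 ≫ isoWZ.hom := by
      show (w'.hom ≫ (peelIso W j1).hom ≫ (biprod.mapIso isoWZ (Iso.refl _)).hom) ≫ _ = _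
      rw [Category.assoc, Category.assoc, biprod.mapIso_hom, biprod.map_fst,
        ← Category.assoc ((peelIso W j1).hom), peelIso_hom_fst]
    calc biprod.inl ≫ (u.inv ≫ d ≫ v.hom) ≫ biprod.fst
        = (biprod.inl ≫ u.inv) ≫ d ≫ (v.hom ≫ biprod.fst) := by simp only [Category.assoc]
      _ = (biproduct.ι Y j0 ≫ w.inv) ≫ d ≫ (w'.hom ≫ biproduct.π W j1 ≫ isoWZ.hom) := by
          rw [e1, e2]
      _ = 𝟙 (Y j0) := by
          have := hd1
          simp only [Category.assoc] at this ⊢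
          simpa only [isoWZ, Category.assoc] using this
  obtain ⟨Lg, Rg, g, hLR⟩ := gaussian_id (u.inv ≫ d ≫ v.hom) hf11
  refine ⟨Y j0, ⨁ (Y ∘ j0.succAbove), ⨁ (W ∘ j1.succAbove), u ≪≫ Lg.symm, v ≪≫ Rg, g, ?_,
    by omega, by omega, ?_, ?_⟩
  · rw [show (u ≪≫ Lg.symm).inv = Lg.hom ≫ u.inv from rfl,
      show (v ≪≫ Rg).hom = v.hom ≫ Rg.hom from rfl, ← hLR]
    simp only [Category.assoc]
  · exact ⟨Y ∘ j0.succAbove, Iso.refl _, fun j => hY _⟩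
  · exact ⟨W ∘ j1.succAbove, Iso.refl _, fun j => hW _⟩

end Alg


section Surgery

variable [HasFiniteBiproducts C] {n : ℕ}

/-- Objects of the surgered complex. -/
def surgObj (X : NComplex C n) (i : ℕ) (K L : C) : ℕ → C :=
  fun j => if j = i then K else if j = i + 1 then L else X.X j

lemma surgObj_i (X : NComplex C n) (i : ℕ) (K L : C) : surgObj X i K L i = K := by
  simp [surgObj]

lemma surgObj_i1 (X : NComplex C n) (i : ℕ) (K L : C) : surgObj X i K L (i + 1) = L := by
  simp [surgObj, (by omega : ¬ (i + 1 = i))]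

lemma surgObj_other (X : NComplex C n) (i : ℕ) (K L : C) {j : ℕ} (h1 : j ≠ i)
    (h2 : j ≠ i + 1) : surgObj X i K L j = X.X j := by
  simp [surgObj, h1, h2]

variable {Z K L : C} (X : NComplex C n) (i : ℕ)

/-- Differentials of the surgered complex. -/
noncomputable def surgD (U : X.X i ≅ Z ⊞ K) (V : X.X (i + 1) ≅ Z ⊞ L) (g : K ⟶ L) (j : ℕ) :
    surgObj X i K L j ⟶ surgObj X i K L (j + 1) :=
  if hj : j + 1 = i then
    eqToHom (surgObj_other X i K L (by omega) (by omega)) ≫ X.d j ≫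
      eqToHom (congrArg X.X hj) ≫ U.hom ≫ biprod.snd ≫
      eqToHom (by rw [hj, surgObj_i])
  else if hj2 : j = i then
    eqToHom (by rw [hj2, surgObj_i]) ≫ g ≫
      eqToHom (show L = surgObj X i K L (j + 1) by
        rw [show j + 1 = i + 1 by omega, surgObj_i1])
  else if hj3 : j = i + 1 then
    eqToHom (show surgObj X i K L j = L by rw [hj3, surgObj_i1]) ≫ biprod.inr ≫ V.inv ≫
      X.d (i + 1) ≫ eqToHom (show X.X (i + 1 + 1) = surgObj X i K L (j + 1) by
        rw [show j + 1 = i + 1 + 1 by omega]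
        exact (surgObj_other X i K L (by omega) (by omega)).symm)
  else
    eqToHom (surgObj_other X i K L hj2 hj3) ≫ X.d j ≫
      eqToHom (surgObj_other X i K L (by omega) (by omega)).symm

/-- The components of the chain map into the surgered complex. -/
noncomputable def surgPhiF (U : X.X i ≅ Z ⊞ K) (V : X.X (i + 1) ≅ Z ⊞ L) (j : ℕ) :
    X.X j ⟶ surgObj X i K L j :=
  if hj : j = i then
    eqToHom (congrArg X.X hj) ≫ U.hom ≫ biprod.snd ≫ eqToHom (by rw [hj, surgObj_i])
  else if hj2 : j = i + 1 then
    eqToHom (congrArg X.X hj2) ≫ V.hom ≫ biprod.snd ≫ eqToHom (by rw [hj2, surgObj_i1])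
  else eqToHom (surgObj_other X i K L hj hj2).symm

/-- The components of the chain map from the surgered complex. -/
noncomputable def surgPsiF (U : X.X i ≅ Z ⊞ K) (V : X.X (i + 1) ≅ Z ⊞ L) (j : ℕ) :
    surgObj X i K L j ⟶ X.X j :=
  if hj : j = i then
    eqToHom (by rw [hj, surgObj_i]) ≫ biprod.inr ≫ U.inv ≫ eqToHom (congrArg X.X hj).symm
  else if hj2 : j = i + 1 then
    eqToHom (by rw [hj2, surgObj_i1]) ≫ biprod.inr ≫ V.inv ≫
      eqToHom (congrArg X.X hj2).symm
  else eqToHom (surgObj_other X i K L hj hj2)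

/-- The homotopy components. -/
noncomputable def surgSF (U : X.X i ≅ Z ⊞ K) (V : X.X (i + 1) ≅ Z ⊞ L) (j : ℕ) :
    X.X (j + 1) ⟶ X.X j :=
  if hj : j = i then
    -(eqToHom (congrArg X.X (by rw [hj] : j + 1 = i + 1)) ≫ V.hom ≫ biprod.fst ≫
      biprod.inl ≫ U.inv ≫ eqToHom (congrArg X.X hj).symm)
  else 0

end Surgery

section SurgeryLemmas

variable [HasFiniteBiproducts C] {n : ℕ} {Z K L : C} (X : NComplex C n) (i : ℕ)
variable (U : X.X i ≅ Z ⊞ K) (V : X.X (i + 1) ≅ Z ⊞ L) (g : K ⟶ L)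

lemma surgD_eq1 (j : ℕ) (hj : j + 1 = i) :
    surgD X i U V g j = eqToHom (surgObj_other X i K L (by omega) (by omega)) ≫ X.d j ≫
      eqToHom (congrArg X.X hj) ≫ U.hom ≫ biprod.snd ≫
      eqToHom (by rw [hj, surgObj_i]) := by
  simp only [surgD]
  rw [dif_pos hj]

lemma surgD_eq2 (j : ℕ) (hj1 : ¬(j + 1 = i)) (hj2 : j = i) :
    surgD X i U V g j = eqToHom (by rw [hj2, surgObj_i]) ≫ g ≫
      eqToHom (show L = surgObj X i K L (j + 1) by
        rw [show j + 1 = i + 1 by omega, surgObj_i1]) := by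
  simp only [surgD]
  rw [dif_neg hj1, dif_pos hj2]

lemma surgD_eq3 (j : ℕ) (hj1 : ¬(j + 1 = i)) (hj2 : ¬(j = i)) (hj3 : j = i + 1) :
    surgD X i U V g j = eqToHom (show surgObj X i K L j = L by rw [hj3, surgObj_i1]) ≫
      biprod.inr ≫ V.inv ≫ X.d (i + 1) ≫
      eqToHom (show X.X (i + 1 + 1) = surgObj X i K L (j + 1) by
        rw [show j + 1 = i + 1 + 1 by omega]
        exact (surgObj_other X i K L (by omega) (by omega)).symm) := by
  simp only [surgD]
  rw [dif_neg hj1, dif_neg hj2, dif_pos hj3]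

lemma surgD_eq4 (j : ℕ) (hj1 : ¬(j + 1 = i)) (hj2 : ¬(j = i)) (hj3 : ¬(j = i + 1)) :
    surgD X i U V g j = eqToHom (surgObj_other X i K L hj2 hj3) ≫ X.d j ≫
      eqToHom (surgObj_other X i K L (by omega) (by omega)).symm := by
  simp only [surgD]
  rw [dif_neg hj1, dif_neg hj2, dif_neg hj3]

lemma surgPhiF_eq1 (j : ℕ) (hj : j = i) :
    surgPhiF X i U V j = eqToHom (congrArg X.X hj) ≫ U.hom ≫ biprod.snd ≫
      eqToHom (by rw [hj, surgObj_i]) := by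
  simp only [surgPhiF]
  rw [dif_pos hj]

lemma surgPhiF_eq2 (j : ℕ) (hj : ¬(j = i)) (hj2 : j = i + 1) :
    surgPhiF X i U V j = eqToHom (congrArg X.X hj2) ≫ V.hom ≫ biprod.snd ≫
      eqToHom (by rw [hj2, surgObj_i1]) := by
  simp only [surgPhiF]
  rw [dif_neg hj, dif_pos hj2]

lemma surgPhiF_eq3 (j : ℕ) (hj : ¬(j = i)) (hj2 : ¬(j = i + 1)) :
    surgPhiF X i U V j = eqToHom (surgObj_other X i K L hj hj2).symm := by
  simp only [surgPhiF]
  rw [dif_neg hj, dif_neg hj2]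

lemma surgPsiF_eq1 (j : ℕ) (hj : j = i) :
    surgPsiF X i U V j = eqToHom (by rw [hj, surgObj_i]) ≫ biprod.inr ≫ U.inv ≫
      eqToHom (congrArg X.X hj).symm := by
  simp only [surgPsiF]
  rw [dif_pos hj]

lemma surgPsiF_eq2 (j : ℕ) (hj : ¬(j = i)) (hj2 : j = i + 1) :
    surgPsiF X i U V j = eqToHom (by rw [hj2, surgObj_i1]) ≫ biprod.inr ≫ V.inv ≫
      eqToHom (congrArg X.X hj2).symm := by
  simp only [surgPsiF]
  rw [dif_neg hj, dif_pos hj2]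

lemma surgPsiF_eq3 (j : ℕ) (hj : ¬(j = i)) (hj2 : ¬(j = i + 1)) :
    surgPsiF X i U V j = eqToHom (surgObj_other X i K L hj hj2) := by
  simp only [surgPsiF]
  rw [dif_neg hj, dif_neg hj2]

lemma surgSF_eq1 (j : ℕ) (hj : j = i) :
    surgSF X i U V j = -(eqToHom (congrArg X.X (by rw [hj] : j + 1 = i + 1)) ≫ V.hom ≫
      biprod.fst ≫ biprod.inl ≫ U.inv ≫ eqToHom (congrArg X.X hj).symm) := by
  simp only [surgSF]
  rw [dif_pos hj]

lemma surgSF_eq2 (j : ℕ) (hj : ¬(j = i)) : surgSF X i U V j = 0 := by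
  simp only [surgSF]
  rw [dif_neg hj]

end SurgeryLemmas

section SurgeryMain

variable [HasZeroObject C] [HasFiniteBiproducts C] {n : ℕ} {Z K L : C}

lemma ETransport_refl (E : Cᵒᵖ ⥤ C ⥤ AddCommGrpCat.{v}) {A B : C} (δ : (E.obj (op B)).obj A) :
    ETransport E rfl rfl δ = δ := by
  simp [ETransport]

lemma ETransport_comp (E : Cᵒᵖ ⥤ C ⥤ AddCommGrpCat.{v}) {A A' A'' B B' B'' : C}
    (hA : A = A') (hB : B = B') (hA' : A' = A'') (hB' : B' = B'')
    (δ : (E.obj (op B)).obj A) :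
    ETransport E hA' hB' (ETransport E hA hB δ) = ETransport E (hA.trans hA') (hB.trans hB') δ := by
  subst hA hB hA' hB'
  rw [ETransport_refl, ETransport_refl]

lemma surgery (S : NExang C n) (X : NComplex C n)
    (δ' : (S.E.obj (op (X.X (n + 1)))).obj (X.X 0)) (hD : S.Dist X δ')
    (i : ℕ) (h1i : 1 ≤ i) (hin : i + 1 ≤ n)
    (U : X.X i ≅ Z ⊞ K) (V : X.X (i + 1) ≅ Z ⊞ L) (g : K ⟶ L)
    (hfac : U.inv ≫ X.d i ≫ V.hom = biprod.map (𝟙 Z) g) :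
    ∃ (X' : NComplex C n) (e0 : X.X 0 = X'.X 0) (e1 : X.X (n + 1) = X'.X (n + 1)),
      S.Dist X' (ETransport S.E e0 e1 δ') ∧ X'.X i = K ∧ X'.X (i + 1) = L ∧
      ∀ j, j ≠ i → j ≠ i + 1 → X'.X j = X.X j := by
  -- basic consequences of the factorization
  have hfac2 : X.d i ≫ V.hom = U.hom ≫ biprod.map (𝟙 Z) g := by
    calc X.d i ≫ V.hom = U.hom ≫ (U.inv ≫ X.d i ≫ V.hom) := by simp
      _ = U.hom ≫ biprod.map (𝟙 Z) g := by rw [hfac]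
  have hfac3 : U.inv ≫ X.d i = biprod.map (𝟙 Z) g ≫ V.inv := by
    calc U.inv ≫ X.d i = (U.inv ≫ X.d i ≫ V.hom) ≫ V.inv := by simp
      _ = biprod.map (𝟙 Z) g ≫ V.inv := by rw [hfac]
  have hfacSnd : ∀ {T : C} (h : L ⟶ T),
      X.d i ≫ V.hom ≫ biprod.snd ≫ h = U.hom ≫ biprod.snd ≫ g ≫ h := by
    intro T h
    rw [← Category.assoc, hfac2]
    simp
  have hfacInr : ∀ {T : C} (h : X.X (i + 1) ⟶ T),
      biprod.inr ≫ U.inv ≫ X.d i ≫ h = g ≫ biprod.inr ≫ V.inv ≫ h := by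
    intro T h
    rw [show U.inv ≫ X.d i ≫ h = (U.inv ≫ X.d i) ≫ h from by simp, hfac3]
    simp
  have hfacInl : ∀ {T : C} (h : X.X (i + 1) ⟶ T),
      biprod.inl ≫ U.inv ≫ X.d i ≫ h = biprod.inl ≫ V.inv ≫ h := by
    intro T h
    rw [show U.inv ≫ X.d i ≫ h = (U.inv ≫ X.d i) ≫ h from by simp, hfac3]
    simp
  have hfacInr0 : biprod.inr ≫ U.inv ≫ X.d i = g ≫ biprod.inr ≫ V.inv := by
    have h2 := congrArg (fun q => biprod.inr ≫ q) hfac3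
    simpa using h2
  have hfacInl0 : biprod.inl ≫ U.inv ≫ X.d i = biprod.inl ≫ V.inv := by
    have h2 := congrArg (fun q => biprod.inl ≫ q) hfac3
    simpa using h2
  -- vanishing lemmas
  have hkey2 : biprod.map (𝟙 Z) g ≫ V.inv ≫ X.d (i + 1) = 0 := by
    have h0 := X.dd i (by omega)
    have h1 : U.inv ≫ X.d i ≫ X.d (i + 1) = 0 := by rw [h0, comp_zero]
    rw [show U.inv ≫ X.d i ≫ X.d (i + 1) = (U.inv ≫ X.d i) ≫ X.d (i + 1) from by simp,
      hfac3] at h1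
    simpa using h1
  have hzC : ∀ {T : C} (h : X.X (i + 1 + 1) ⟶ T),
      biprod.inl ≫ V.inv ≫ X.d (i + 1) ≫ h = 0 := by
    intro T h
    have h2 : biprod.inl ≫ (biprod.map (𝟙 Z) g ≫ V.inv ≫ X.d (i + 1)) ≫ h = 0 := by
      rw [hkey2, zero_comp, comp_zero]
    simpa using h2
  have hzD : ∀ {T : C} (h : X.X (i + 1 + 1) ⟶ T),
      g ≫ biprod.inr ≫ V.inv ≫ X.d (i + 1) ≫ h = 0 := by
    intro T h
    have h2 : biprod.inr ≫ (biprod.map (𝟙 Z) g ≫ V.inv ≫ X.d (i + 1)) ≫ h = 0 := by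
      rw [hkey2, zero_comp, comp_zero]
    simpa using h2
  -- splitting identities
  have hsrU : (biprod.snd ≫ biprod.inr : Z ⊞ K ⟶ Z ⊞ K) = 𝟙 _ - biprod.fst ≫ biprod.inl := by
    rw [← biprod.total]
    abel
  have hsrV : (biprod.snd ≫ biprod.inr : Z ⊞ L ⟶ Z ⊞ L) = 𝟙 _ - biprod.fst ≫ biprod.inl := by
    rw [← biprod.total]
    abel
  have hVsplit : ∀ {T : C} (h : X.X (i + 1 + 1) ⟶ T),
      V.hom ≫ biprod.snd ≫ biprod.inr ≫ V.inv ≫ X.d (i + 1) ≫ h = X.d (i + 1) ≫ h := by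
    intro T h
    calc V.hom ≫ biprod.snd ≫ biprod.inr ≫ V.inv ≫ X.d (i + 1) ≫ h
        = V.hom ≫ (biprod.snd ≫ biprod.inr) ≫ V.inv ≫ X.d (i + 1) ≫ h := by
          simp only [Category.assoc]
      _ = V.hom ≫ (𝟙 _ - biprod.fst ≫ biprod.inl) ≫ V.inv ≫ X.d (i + 1) ≫ h := by rw [hsrV]
      _ = X.d (i + 1) ≫ h - V.hom ≫ biprod.fst ≫ biprod.inl ≫ V.inv ≫ X.d (i + 1) ≫ h := by
          simp [Preadditive.sub_comp, Preadditive.comp_sub]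
      _ = X.d (i + 1) ≫ h := by rw [hzC]; simp
  -- d² = 0 for the surgered complex
  have hdd : ∀ j, j + 1 ≤ n → surgD X i U V g j ≫ surgD X i U V g (j + 1) = 0 := by
    intro j hjn
    have hddX : ∀ k, k + 1 ≤ n → ∀ {T : C} (h : X.X (k + 1 + 1) ⟶ T),
        X.d k ≫ X.d (k + 1) ≫ h = 0 := by
      intro k hk T h
      rw [← Category.assoc, X.dd k hk, zero_comp]
    by_cases hj1 : j + 1 = i
    · subst hj1
      have h0 := X.dd j (by omega)
      have hkey : X.d j ≫ U.hom ≫ biprod.map (𝟙 Z) g = 0 := by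
        have h1 : X.d j ≫ X.d (j + 1) ≫ V.hom = 0 := by
          rw [← Category.assoc, h0, zero_comp]
        rw [hfac2] at h1
        exact h1
      have hzB : ∀ {T : C} (h : L ⟶ T), X.d j ≫ U.hom ≫ biprod.snd ≫ g ≫ h = 0 := by
        intro T h
        have h2 := congrArg (fun q => q ≫ biprod.snd ≫ h) hkey
        simpa using h2
      rw [surgD_eq1 X _ U V g j rfl,
        surgD_eq2 X _ U V g (j + 1) (by omega) rfl]
      simp only [Category.assoc, eqToHom_trans_assoc, eqToHom_refl, Category.id_comp]
      rw [hzB]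
      simp
    · by_cases hj2 : j = i
      · subst hj2
        rw [surgD_eq2 X _ U V g j hj1 rfl,
          surgD_eq3 X _ U V g (j + 1) (by omega) (by omega) rfl]
        simp only [Category.assoc, eqToHom_trans_assoc, eqToHom_refl, Category.id_comp]
        rw [hzD]
        simp
      · by_cases hj3 : j = i + 1
        · subst hj3
          rw [surgD_eq3 X _ U V g (i + 1) hj1 hj2 rfl,
            surgD_eq4 X _ U V g (i + 1 + 1) (by omega) (by omega) (by omega)]
          simp only [Category.assoc, eqToHom_trans_assoc, eqToHom_refl, Category.id_comp]
          rw [hddX (i + 1) (by omega)]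
          simp
        · by_cases hj4 : j + 1 + 1 = i
          · rw [surgD_eq4 X _ U V g j hj1 hj2 hj3,
              surgD_eq1 X _ U V g (j + 1) hj4]
            simp only [Category.assoc, eqToHom_trans_assoc, eqToHom_refl, Category.id_comp]
            rw [hddX j (by omega)]
            simp
          · rw [surgD_eq4 X _ U V g j hj1 hj2 hj3,
              surgD_eq4 X _ U V g (j + 1) hj4 (by omega) (by omega)]
            simp only [Category.assoc, eqToHom_trans_assoc, eqToHom_refl, Category.id_comp]
            rw [hddX j (by omega)]
            simp
  -- chain map conditions
  have hcommφ : ∀ j, j ≤ n →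
      X.d j ≫ surgPhiF X i U V (j + 1) = surgPhiF X i U V j ≫ surgD X i U V g j := by
    intro j hjn
    by_cases hj1 : j + 1 = i
    · subst hj1
      rw [surgPhiF_eq1 X _ U V (j + 1) rfl,
        surgPhiF_eq3 X _ U V j (by omega) (by omega),
        surgD_eq1 X _ U V g j rfl]
      simp
    · by_cases hj2 : j = i
      · subst hj2
        rw [surgPhiF_eq2 X _ U V (j + 1) (by omega) rfl,
          surgPhiF_eq1 X _ U V j rfl,
          surgD_eq2 X _ U V g j hj1 rfl]
        simp only [Category.assoc, eqToHom_trans_assoc, eqToHom_refl, Category.id_comp]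
        rw [hfacSnd]
      · by_cases hj3 : j = i + 1
        · subst hj3
          rw [surgPhiF_eq3 X _ U V (i + 1 + 1) (by omega) (by omega),
            surgPhiF_eq2 X _ U V (i + 1) hj2 rfl,
            surgD_eq3 X _ U V g (i + 1) hj1 hj2 rfl]
          simp only [Category.assoc, eqToHom_trans_assoc, eqToHom_refl, Category.id_comp]
          rw [hVsplit]
        · rw [surgPhiF_eq3 X _ U V (j + 1) (by omega) (by omega),
            surgPhiF_eq3 X _ U V j hj2 hj3,
            surgD_eq4 X _ U V g j hj1 hj2 hj3]
          simp
  have hcommψ : ∀ j, j ≤ n →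
      surgD X i U V g j ≫ surgPsiF X i U V (j + 1) = surgPsiF X i U V j ≫ X.d j := by
    intro j hjn
    by_cases hj1 : j + 1 = i
    · subst hj1
      have h0 := X.dd j (by omega)
      have hkey : X.d j ≫ U.hom ≫ biprod.map (𝟙 Z) g = 0 := by
        have h1 : X.d j ≫ X.d (j + 1) ≫ V.hom = 0 := by
          rw [← Category.assoc, h0, zero_comp]
        rw [hfac2] at h1
        exact h1
      have hzA : ∀ {T : C} (h : Z ⟶ T), X.d j ≫ U.hom ≫ biprod.fst ≫ h = 0 := by
        intro T h
        have h2 := congrArg (fun q => q ≫ biprod.fst ≫ h) hkey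
        simpa using h2
      have hUsplit : ∀ {T : C} (h : X.X (j + 1) ⟶ T),
          X.d j ≫ U.hom ≫ biprod.snd ≫ biprod.inr ≫ U.inv ≫ h = X.d j ≫ h := by
        intro T h
        calc X.d j ≫ U.hom ≫ biprod.snd ≫ biprod.inr ≫ U.inv ≫ h
            = X.d j ≫ U.hom ≫ (biprod.snd ≫ biprod.inr) ≫ U.inv ≫ h := by
              simp only [Category.assoc]
          _ = X.d j ≫ U.hom ≫ (𝟙 _ - biprod.fst ≫ biprod.inl) ≫ U.inv ≫ h := by rw [hsrU]
          _ = X.d j ≫ h - X.d j ≫ U.hom ≫ biprod.fst ≫ biprod.inl ≫ U.inv ≫ h := by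
              simp [Preadditive.sub_comp, Preadditive.comp_sub]
          _ = X.d j ≫ h := by rw [hzA]; simp
      have hUsplit0 : X.d j ≫ U.hom ≫ biprod.snd ≫ biprod.inr ≫ U.inv = X.d j := by
        have h3 := hUsplit (𝟙 _)
        simpa using h3
      rw [surgD_eq1 X _ U V g j rfl,
        surgPsiF_eq1 X _ U V (j + 1) rfl,
        surgPsiF_eq3 X _ U V j (by omega) (by omega)]
      simp only [Category.assoc, eqToHom_trans_assoc, eqToHom_refl, Category.id_comp,
        Category.comp_id, eqToHom_trans]
      rw [hUsplit0]
    · by_cases hj2 : j = i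
      · subst hj2
        rw [surgD_eq2 X _ U V g j hj1 rfl,
          surgPsiF_eq2 X _ U V (j + 1) (by omega) rfl,
          surgPsiF_eq1 X _ U V j rfl]
        simp only [Category.assoc, eqToHom_trans_assoc, eqToHom_refl, Category.id_comp,
          Category.comp_id, eqToHom_trans]
        rw [hfacInr0]
      · by_cases hj3 : j = i + 1
        · subst hj3
          rw [surgD_eq3 X _ U V g (i + 1) hj1 hj2 rfl,
            surgPsiF_eq3 X _ U V (i + 1 + 1) (by omega) (by omega),
            surgPsiF_eq2 X _ U V (i + 1) hj2 rfl]
          simp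
        · rw [surgD_eq4 X _ U V g j hj1 hj2 hj3,
            surgPsiF_eq3 X _ U V (j + 1) (by omega) (by omega),
            surgPsiF_eq3 X _ U V j hj2 hj3]
          simp
  -- φ ∘ ψ components
  have hφψ_other : ∀ j, ¬(j = i) → ¬(j = i + 1) →
      surgPhiF X i U V j ≫ surgPsiF X i U V j = 𝟙 (X.X j) := by
    intro j h1 h2
    rw [surgPhiF_eq3 X _ U V j h1 h2, surgPsiF_eq3 X _ U V j h1 h2]
    simp
  have hφψ_i : surgPhiF X i U V i ≫ surgPsiF X i U V i =
      𝟙 (X.X i) - U.hom ≫ biprod.fst ≫ biprod.inl ≫ U.inv := by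
    rw [surgPhiF_eq1 X _ U V i rfl, surgPsiF_eq1 X _ U V i rfl]
    simp only [Category.assoc, eqToHom_trans_assoc, eqToHom_refl, Category.id_comp,
      Category.comp_id, eqToHom_trans]
    calc U.hom ≫ biprod.snd ≫ biprod.inr ≫ U.inv
        = U.hom ≫ (biprod.snd ≫ biprod.inr) ≫ U.inv := by simp only [Category.assoc]
      _ = U.hom ≫ (𝟙 _ - biprod.fst ≫ biprod.inl) ≫ U.inv := by rw [hsrU]
      _ = 𝟙 (X.X i) - U.hom ≫ biprod.fst ≫ biprod.inl ≫ U.inv := by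
          simp [Preadditive.sub_comp, Preadditive.comp_sub]
  have hφψ_i1 : surgPhiF X i U V (i + 1) ≫ surgPsiF X i U V (i + 1) =
      𝟙 (X.X (i + 1)) - V.hom ≫ biprod.fst ≫ biprod.inl ≫ V.inv := by
    rw [surgPhiF_eq2 X _ U V (i + 1) (by omega) rfl, surgPsiF_eq2 X _ U V (i + 1) (by omega) rfl]
    simp only [Category.assoc, eqToHom_trans_assoc, eqToHom_refl, Category.id_comp,
      Category.comp_id, eqToHom_trans]
    calc V.hom ≫ biprod.snd ≫ biprod.inr ≫ V.inv
        = V.hom ≫ (biprod.snd ≫ biprod.inr) ≫ V.inv := by simp only [Category.assoc]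
      _ = V.hom ≫ (𝟙 _ - biprod.fst ≫ biprod.inl) ≫ V.inv := by rw [hsrV]
      _ = 𝟙 (X.X (i + 1)) - V.hom ≫ biprod.fst ≫ biprod.inl ≫ V.inv := by
          simp [Preadditive.sub_comp, Preadditive.comp_sub]
  have hψφ : ∀ j, surgPsiF X i U V j ≫ surgPhiF X i U V j = 𝟙 (surgObj X i K L j) := by
    intro j
    by_cases h1 : j = i
    · subst h1
      rw [surgPhiF_eq1 X _ U V j rfl, surgPsiF_eq1 X _ U V j rfl]
      simp
    · by_cases h2 : j = i + 1
      · subst h2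
        rw [surgPhiF_eq2 X _ U V (i + 1) h1 rfl, surgPsiF_eq2 X _ U V (i + 1) h1 rfl]
        simp
      · rw [surgPhiF_eq3 X _ U V j h1 h2, surgPsiF_eq3 X _ U V j h1 h2]
        simp
  -- assemble
  refine ⟨⟨surgObj X i K L, surgD X i U V g, hdd⟩,
    (surgObj_other X i K L (by omega) (by omega)).symm,
    (surgObj_other X i K L (by omega) (by omega)).symm, ?_,
    surgObj_i X i K L, surgObj_i1 X i K L,
    fun j hj hj2 => surgObj_other X i K L hj hj2⟩
  apply S.closedHtpy X _ δ' _ _ hD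
  refine ⟨⟨surgPhiF X i U V, hcommφ⟩, ⟨surgPsiF X i U V, hcommψ⟩, ?_, ?_, ?_, ?_, ⟨?_⟩, ⟨?_⟩⟩
  · show surgPhiF X i U V 0 = _
    rw [surgPhiF_eq3 X _ U V 0 (by omega) (by omega)]
  · show surgPhiF X i U V (n + 1) = _
    rw [surgPhiF_eq3 X _ U V (n + 1) (by omega) (by omega)]
  · show surgPsiF X i U V 0 = _
    rw [surgPsiF_eq3 X _ U V 0 (by omega) (by omega)]
  · show surgPsiF X i U V (n + 1) = _
    rw [surgPsiF_eq3 X _ U V (n + 1) (by omega) (by omega)]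
  · -- homotopy from φ ∘ ψ to the identity
    refine ⟨surgSF X i U V, ?_, ?_, ?_⟩
    · show surgPhiF X i U V 0 ≫ surgPsiF X i U V 0 - 𝟙 (X.X 0) = X.d 0 ≫ surgSF X i U V 0
      rw [hφψ_other 0 (by omega) (by omega), surgSF_eq2 X _ U V 0 (by omega)]
      simp
    · intro j hjn
      show surgPhiF X i U V (j + 1) ≫ surgPsiF X i U V (j + 1) - 𝟙 (X.X (j + 1)) =
        surgSF X i U V j ≫ X.d j + X.d (j + 1) ≫ surgSF X i U V (j + 1)
      by_cases hj1 : j + 1 = i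
      · subst hj1
        rw [hφψ_i, surgSF_eq2 X _ U V j (by omega), surgSF_eq1 X _ U V (j + 1) rfl]
        simp only [zero_comp, zero_add, sub_sub_cancel_left, eqToHom_refl,
          Category.id_comp, Category.comp_id, Preadditive.comp_neg]
        rw [show X.d (j + 1) ≫ V.hom ≫ biprod.fst ≫ biprod.inl ≫ U.inv =
          U.hom ≫ biprod.fst ≫ biprod.inl ≫ U.inv from by
            rw [← Category.assoc, hfac2]; simp]
      · by_cases hj2 : j = i
        · subst hj2
          rw [hφψ_i1, surgSF_eq1 X _ U V j rfl, surgSF_eq2 X _ U V (j + 1) (by omega)]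
          simp only [comp_zero, add_zero, eqToHom_refl, Category.id_comp, Category.comp_id,
            Preadditive.neg_comp]
          rw [show (V.hom ≫ biprod.fst ≫ biprod.inl ≫ U.inv) ≫ X.d j =
            V.hom ≫ biprod.fst ≫ biprod.inl ≫ V.inv from by
              simp only [Category.assoc]
              rw [hfacInl0]]
          abel
        · rw [hφψ_other (j + 1) hj1 (by omega), surgSF_eq2 X _ U V j hj2,
            surgSF_eq2 X _ U V (j + 1) hj1]
          simp
    · show surgPhiF X i U V (n + 1) ≫ surgPsiF X i U V (n + 1) - 𝟙 (X.X (n + 1)) =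
        surgSF X i U V n ≫ X.d n
      rw [hφψ_other (n + 1) (by omega) (by omega), surgSF_eq2 X _ U V n (by omega)]
      simp
  · -- homotopy from ψ ∘ φ to the identity
    refine ⟨fun _ => 0, ?_, ?_, ?_⟩
    · show surgPsiF X i U V 0 ≫ surgPhiF X i U V 0 - 𝟙 _ = surgD X i U V g 0 ≫ 0
      rw [hψφ 0]
      simp
    · intro j hjn
      show surgPsiF X i U V (j + 1) ≫ surgPhiF X i U V (j + 1) - 𝟙 _ =
        (0 : _ ⟶ _) ≫ surgD X i U V g j + surgD X i U V g (j + 1) ≫ 0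
      rw [hψφ (j + 1)]
      simp
    · show surgPsiF X i U V (n + 1) ≫ surgPhiF X i U V (n + 1) - 𝟙 _ =
        (0 : _ ⟶ _) ≫ surgD X i U V g n
      rw [hψφ (n + 1)]
      simp

end SurgeryMain


/-- Lemma 3.3, existence of minimal realizations.  In a Krull–Schmidt
`n`-exangulated category, every `E`-extension `δ ∈ E(B, A)` admits a distinguished
`n`-exangle realization `A → A₁ → ⋯ → A_n → B` in which all the inner differentials
`A₁ → A₂, …, A_{n-1} → A_n` lie in the Jacobson radical of `C`. -/
theorem stmt4 {C : Type u} [Category.{v} C] [Preadditive C] [HasZeroObject C]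
    [HasFiniteBiproducts C] {n : ℕ} (hn : 0 < n) (S : NExang C n)
    (hKS : IsKrullSchmidt C) (A B : C) (δ : (S.E.obj (op B)).obj A) :
    ∃ (X : NComplex C n) (h0 : X.X 0 = A) (h1 : X.X (n + 1) = B),
      S.Dist X (ETransport S.E h0.symm h1.symm δ) ∧ MinimalCpx X := by
  obtain ⟨X0, hA0, hB0, hD0⟩ := S.realize A B δ
  suffices H : ∀ (N : ℕ) (X : NComplex C n) (hA : X.X 0 = A) (hB : X.X (n + 1) = B),
      S.Dist X (ETransport S.E hA.symm hB.symm δ) →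
      ∀ (m : ℕ → ℕ), (∀ i, 1 ≤ i → i ≤ n → Decomp (m i) (X.X i)) →
      (∑ i ∈ Finset.Icc 1 n, m i) ≤ N →
      ∃ (X' : NComplex C n) (h0 : X'.X 0 = A) (h1 : X'.X (n + 1) = B),
        S.Dist X' (ETransport S.E h0.symm h1.symm δ) ∧ MinimalCpx X' by
    have hdec : ∀ i : ℕ, ∃ m, Decomp m (X0.X i) := by
      intro i
      obtain ⟨k, Y, e, hY⟩ := hKS (X0.X i)
      exact ⟨k, Y, e, hY⟩
    choose m hm using hdec
    exact H (∑ i ∈ Finset.Icc 1 n, m i) X0 hA0 hB0 hD0 m (fun i _ _ => hm i) le_rfl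
  intro N
  induction N using Nat.strong_induction_on with
  | _ N IH =>
  intro X hA hB hD m hm hsum
  by_cases hmin : MinimalCpx X
  · exact ⟨X, hA, hB, hD, hmin⟩
  · rw [MinimalCpx] at hmin
    push_neg at hmin
    obtain ⟨i, h1i, hin, hnr⟩ := hmin
    obtain ⟨Z, K, L, U, V, g, hfac, hm1, hm2, hdK, hdL⟩ :=
      split_step (hm i h1i (by omega)) (hm (i + 1) (by omega) (by omega)) (X.d i) hnr
    obtain ⟨X', e0, e1, hD', hXK, hXL, hXo⟩ :=
      surgery S X (ETransport S.E hA.symm hB.symm δ) hD i h1i hin U V g hfac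
    rw [ETransport_comp] at hD'
    set m' : ℕ → ℕ := fun j => if j = i then m i - 1 else if j = i + 1 then m (i + 1) - 1
      else m j with hm'
    have hm'i : m' i = m i - 1 := by simp [hm']
    have hm'i1 : m' (i + 1) = m (i + 1) - 1 := by
      simp [hm', (show ¬(i + 1 = i) by omega)]
    have hm'o : ∀ j, j ≠ i → j ≠ i + 1 → m' j = m j := by
      intro j h1 h2
      simp [hm', h1, h2]
    have hm'dec : ∀ j, 1 ≤ j → j ≤ n → Decomp (m' j) (X'.X j) := by
      intro j hj1 hj2
      by_cases h1 : j = i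
      · subst h1
        rw [hXK, hm'i]
        exact hdK
      · by_cases h2 : j = i + 1
        · subst h2
          rw [hXL, hm'i1]
          exact hdL
        · rw [hXo j h1 h2, hm'o j h1 h2]
          exact hm j hj1 hj2
    have hlt : (∑ j ∈ Finset.Icc 1 n, m' j) < ∑ j ∈ Finset.Icc 1 n, m j := by
      apply Finset.sum_lt_sum
      · intro j _
        by_cases h1 : j = i
        · subst h1
          rw [hm'i]
          omega
        · by_cases h2 : j = i + 1
          · subst h2
            rw [hm'i1]
            omega
          · rw [hm'o j h1 h2]
      · refine ⟨i, Finset.mem_Icc.2 ⟨h1i, by omega⟩, ?_⟩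
        rw [hm'i]
        omega
    exact IH (∑ j ∈ Finset.Icc 1 n, m' j) (by omega) X' (e0.symm.trans hA)
      (e1.symm.trans hB) hD' m' hm'dec le_rfl


end NExangPaper
end

section
/- Let (C,E,s) be a Krull–Schmidt n-exangulated category. Then the minimal distinguished n-exangle realizing a given extension δ ∈ E(A_{n+1}, A₀) is unique up to isomorphism of complexes. -/
open CategoryTheory CategoryTheory.Limits Opposite ZeroObject

universe v u

namespace NExangPaper

attribute [local instance] CategoryTheory.Limits.hasBinaryBiproducts_of_finite_biproducts


variable {C : Type u} [Category.{v} C] [Preadditive C]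

variable {n : ℕ}

section Stmt6Aux

variable {C : Type u} [Category.{v} C] [Preadditive C]

lemma switch_isIso {X Y : C} (f : X ⟶ Y) (g : Y ⟶ X) (h : IsIso (𝟙 X - f ≫ g)) :
    IsIso (𝟙 Y - g ≫ f) := by
  set u := inv (𝟙 X - f ≫ g) with hu
  have h1 : u - (f ≫ g) ≫ u = 𝟙 X := by
    have := IsIso.hom_inv_id (𝟙 X - f ≫ g)
    rwa [Preadditive.sub_comp, Category.id_comp] at this
  have h2 : u - u ≫ (f ≫ g) = 𝟙 X := by
    have := IsIso.inv_hom_id (𝟙 X - f ≫ g)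
    rwa [Preadditive.comp_sub, Category.comp_id] at this
  have h1a : f ≫ g ≫ u = u - 𝟙 X := by
    rw [← Category.assoc, ← h1]; abel
  have h2a : u ≫ f ≫ g = u - 𝟙 X := by
    rw [← h2]; abel
  have h1' : ∀ {Z : C} (w : X ⟶ Z), f ≫ g ≫ u ≫ w = u ≫ w - w := by
    intro Z w
    rw [show f ≫ g ≫ u ≫ w = (f ≫ g ≫ u) ≫ w by simp [Category.assoc], h1a,
      Preadditive.sub_comp, Category.id_comp]
  refine ⟨⟨𝟙 Y + g ≫ u ≫ f, ?_, ?_⟩⟩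
  · simp only [Preadditive.sub_comp, Preadditive.comp_add, Preadditive.add_comp,
      Preadditive.comp_sub, Category.id_comp, Category.comp_id, Category.assoc, h1']
    abel
  · have h2' : g ≫ u ≫ f ≫ g ≫ f = g ≫ u ≫ f - g ≫ f := by
      rw [show g ≫ u ≫ f ≫ g ≫ f = g ≫ (u ≫ f ≫ g) ≫ f by simp [Category.assoc], h2a,
        Preadditive.sub_comp, Category.id_comp, Preadditive.comp_sub]
    simp only [Preadditive.sub_comp, Preadditive.comp_add, Preadditive.add_comp,
      Preadditive.comp_sub, Category.id_comp, Category.comp_id, Category.assoc, h2']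
    abel

lemma isIso_one_add_of_sq_zero {X : C} (a : X ⟶ X) (h : a ≫ a = 0) : IsIso (𝟙 X + a) := by
  refine ⟨⟨𝟙 X - a, ?_, ?_⟩⟩ <;>
  · simp only [Preadditive.add_comp, Preadditive.comp_sub, Preadditive.sub_comp,
      Preadditive.comp_add, Category.id_comp, Category.comp_id, h]
    abel

lemma key_isIso {n : ℕ} (X : NComplex C n) (hmX : MinimalCpx X) (θ : ChainMap X X)
    (H : Homotopy' θ (ChainMap.id X)) (ht0 : θ.f 0 = 𝟙 _) (httop : θ.f (n + 1) = 𝟙 _)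
    (i : ℕ) (hi : i + 1 ≤ n) : IsIso (θ.f (i + 1)) := by
  have hd0 : X.d 0 ≫ H.s 0 = 0 := by
    simpa [ChainMap.id, ht0] using H.comm0.symm
  have hdn : H.s n ≫ X.d n = 0 := by
    simpa [ChainMap.id, httop] using H.commTop.symm
  have hcomm : θ.f (i + 1) - 𝟙 _ = H.s i ≫ X.d i + X.d (i + 1) ≫ H.s (i + 1) := by
    simpa [ChainMap.id] using H.comm i hi
  have hz : X.d i ≫ X.d (i + 1) ≫ H.s (i + 1) = 0 := by
    rw [← Category.assoc, X.dd i hi, zero_comp]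
  have hfac : θ.f (i + 1) =
      (𝟙 _ + H.s i ≫ X.d i) ≫ (𝟙 _ + X.d (i + 1) ≫ H.s (i + 1)) := by
    have := eq_add_of_sub_eq hcomm
    rw [this]
    simp only [Preadditive.add_comp, Preadditive.comp_add, Category.id_comp,
      Category.comp_id, Category.assoc, hz, comp_zero]
    abel
  rw [hfac]
  have h1 : IsIso (𝟙 (X.X (i + 1)) + H.s i ≫ X.d i) := by
    rcases Nat.eq_zero_or_pos i with rfl | hipos
    · refine isIso_one_add_of_sq_zero _ ?_
      rw [show (H.s 0 ≫ X.d 0) ≫ H.s 0 ≫ X.d 0 = H.s 0 ≫ (X.d 0 ≫ H.s 0) ≫ X.d 0 by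
        simp [Category.assoc], hd0, zero_comp, comp_zero]
    · have hr : IsIso (𝟙 (X.X i) - X.d i ≫ (-(H.s i))) := hmX i hipos hi (-(H.s i))
      have := switch_isIso (X.d i) (-(H.s i)) hr
      simpa [Preadditive.neg_comp, sub_neg_eq_add] using this
  have h2 : IsIso (𝟙 (X.X (i + 1)) + X.d (i + 1) ≫ H.s (i + 1)) := by
    rcases eq_or_lt_of_le hi with heq | hlt
    · subst heq
      refine isIso_one_add_of_sq_zero _ ?_
      rw [show (X.d (i + 1) ≫ H.s (i + 1)) ≫ X.d (i + 1) ≫ H.s (i + 1) =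
        X.d (i + 1) ≫ (H.s (i + 1) ≫ X.d (i + 1)) ≫ H.s (i + 1) by simp [Category.assoc],
        hdn, zero_comp, comp_zero]
    · have hr := hmX (i + 1) (by omega) (by omega) (-(H.s (i + 1)))
      simpa [Preadditive.comp_neg, sub_neg_eq_add] using hr
  exact IsIso.comp_isIso' h1 h2

end Stmt6Aux

/-- Remark 3.4.  In a Krull–Schmidt `n`-exangulated category, the minimal
distinguished `n`-exangle realizing a given extension `δ` is unique up to isomorphism of
complexes. -/
theorem stmt6 {C : Type u} [Category.{v} C] [Preadditive C] [HasZeroObject C]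
    [HasFiniteBiproducts C] {n : ℕ} (hn : 0 < n) (S : NExang C n)
    (hKS : IsKrullSchmidt C) (X Y : NComplex C n)
    (δ : (S.E.obj (op (X.X (n + 1)))).obj (X.X 0))
    (h0 : X.X 0 = Y.X 0) (h1 : X.X (n + 1) = Y.X (n + 1))
    (hX : S.Dist X δ) (hY : S.Dist Y (ETransport S.E h0 h1 δ))
    (hmX : MinimalCpx X) (hmY : MinimalCpx Y) :
    Nonempty (CpxIso X Y) := by
  obtain ⟨φ, ψ, hφ0, hφn, hψ0, hψn, ⟨HX⟩, ⟨HY⟩⟩ := S.unique X Y δ h0 h1 hX hY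
  have hθ0 : (φ.comp ψ).f 0 = 𝟙 _ := by simp [ChainMap.comp, hφ0, hψ0]
  have hθn : (φ.comp ψ).f (n + 1) = 𝟙 _ := by simp [ChainMap.comp, hφn, hψn]
  have hθ'0 : (ψ.comp φ).f 0 = 𝟙 _ := by simp [ChainMap.comp, hφ0, hψ0]
  have hθ'n : (ψ.comp φ).f (n + 1) = 𝟙 _ := by simp [ChainMap.comp, hφn, hψn]
  have hiso : ∀ j, j ≤ n + 1 → IsIso (φ.f j) := by
    intro j hj
    by_cases hj0 : j = 0
    · subst hj0; rw [hφ0]; infer_instance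
    by_cases hjn : j = n + 1
    · subst hjn; rw [hφn]; infer_instance
    obtain ⟨i, rfl⟩ : ∃ i, j = i + 1 := ⟨j - 1, by omega⟩
    have hA : IsIso (φ.f (i + 1) ≫ ψ.f (i + 1)) :=
      key_isIso X hmX _ HX hθ0 hθn i (by omega)
    have hB : IsIso (ψ.f (i + 1) ≫ φ.f (i + 1)) :=
      key_isIso Y hmY _ HY hθ'0 hθ'n i (by omega)
    set a := φ.f (i + 1)
    set b := ψ.f (i + 1)
    have h1 : a ≫ b ≫ inv (a ≫ b) = 𝟙 _ := by rw [← Category.assoc, IsIso.hom_inv_id]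
    have h2 : (inv (b ≫ a) ≫ b) ≫ a = 𝟙 _ := by rw [Category.assoc, IsIso.inv_hom_id]
    have heq : b ≫ inv (a ≫ b) = inv (b ≫ a) ≫ b := by
      calc b ≫ inv (a ≫ b) = 𝟙 _ ≫ (b ≫ inv (a ≫ b)) := by rw [Category.id_comp]
        _ = ((inv (b ≫ a) ≫ b) ≫ a) ≫ (b ≫ inv (a ≫ b)) := by rw [h2]
        _ = (inv (b ≫ a) ≫ b) ≫ (a ≫ b ≫ inv (a ≫ b)) := by simp [Category.assoc]
        _ = inv (b ≫ a) ≫ b := by rw [h1, Category.comp_id]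
    refine ⟨⟨b ≫ inv (a ≫ b), h1, ?_⟩⟩
    rw [heq]; exact h2
  exact ⟨⟨fun i hi => @asIso _ _ _ _ (φ.f i) (hiso i hi),
    fun i hi => by simpa using φ.comm i hi⟩⟩

end NExangPaper
end
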